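/- arXiv:1408.5838 — 4 statements merged into one kernel-verified Lean document; each statement's English description precedes it below -/
import Mathlib

section
/- Let (W,S) be a Coxeter system with automorphism σ preserving S. Let O be a σ-conjugacy class of W, w, w' ∈ W with w' = s w σ(s) for some s ∈ S and ℓ(w') = ℓ(w) ± 0 or less (i.e., w →_σ w' in one step). If there exists a minimal length element x of O with x ≤ w', then there exists a minimal length element y of O with y ≤ w (Bruhat order). -/
/-- Bruhat order on a Coxeter group (subword property). -/
def CoxeterSystem.bruhatLE {B W : Type*} [Group W] {M : CoxeterMatrix B}
    (cs : CoxeterSystem M W) (x w : W) : Prop :=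
  ∃ ω : List B, cs.wordProd ω = w ∧ cs.IsReduced ω ∧
    ∃ ω' : List B, ω'.Sublist ω ∧ cs.wordProd ω' = x

/-- `y` is a σ-conjugate of `x`. -/
def sigmaConj {W : Type*} [Group W] (σ : W ≃* W) (y x : W) : Prop :=
  ∃ g : W, y = g * x * (σ g)⁻¹

/-- `x` is of minimal length in the σ-conjugacy class of `o`. -/
def minLenIn {B W : Type*} [Group W] {M : CoxeterMatrix B} (cs : CoxeterSystem M W)
    (σ : W ≃* W) (o x : W) : Prop :=
  sigmaConj σ x o ∧ ∀ y : W, sigmaConj σ y o → cs.length x ≤ cs.length y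

namespace CoxKR

open List CoxeterSystem

open scoped Classical

theorem conj_eq_iff {G : Type*} [Group G] (Q a Z : G) :
    Q⁻¹ * a * Q = Z ↔ a = Q * Z * Q⁻¹ := by
  constructor
  · intro h; rw [← h]; group
  · intro h; rw [h]; group

theorem invol_conj_eq_iff {G : Type*} [Group G] {j : G} (hj : j * j = 1) (X Y : G) :
    j * X * j = Y ↔ X = j * Y * j := by
  constructor
  · intro h; rw [← h, show j * (j * X * j) * j = (j*j) * X * (j*j) by group, hj, one_mul, mul_one]
  · intro h; rw [h, show j * (j * Y * j) * j = (j*j) * Y * (j*j) by group, hj, one_mul, mul_one]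

variable {B W : Type*} [Group W] {M : CoxeterMatrix B} (cs : CoxeterSystem M W)

local prefix:100 "σ" => cs.simple
local prefix:100 "π" => cs.wordProd
local prefix:100 "ℓ" => cs.length

/-- The sign-cocycle function attached to a simple reflection. -/
noncomputable def phiAux (i : B) : W × ZMod 2 → W × ZMod 2 :=
  fun p => (σ i * p.1 * σ i, p.2 + if p.1 = σ i then 1 else 0)

theorem phiAux_invol (i : B) : Function.Involutive (phiAux cs i) := by
  rintro ⟨a, ε⟩
  have hss := cs.simple_mul_simple_self i
  simp only [phiAux]
  refine Prod.ext ?_ ?_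
  · show σ i * (σ i * a * σ i) * σ i = a
    rw [show σ i * (σ i * a * σ i) * σ i = (σ i * σ i) * a * (σ i * σ i) by group, hss,
      one_mul, mul_one]
  · show (ε + if a = σ i then 1 else 0) + (if σ i * a * σ i = σ i then 1 else 0) = ε
    have hiff : (σ i * a * σ i = σ i) ↔ (a = σ i) := by
      rw [invol_conj_eq_iff hss, hss, one_mul]
    rw [if_congr hiff rfl rfl]
    by_cases h : a = σ i
    · simp only [h, if_true]
      have : ∀ x : ZMod 2, x + 1 + 1 = x := by decide
      exact this ε
    · simp [h]

/-- The sign permutation attached to a simple reflection. -/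
noncomputable def phiP (i : B) : Equiv.Perm (W × ZMod 2) := (phiAux_invol cs i).toPerm _

theorem phiP_apply (i : B) (p : W × ZMod 2) : phiP cs i p = phiAux cs i p := rfl

theorem sj_pk (i j : B) (k : ℕ) :
    σ j * (σ i * σ j) ^ k = (σ j * σ i) ^ k * σ j := by
  induction k with
  | zero => simp
  | succ k ih =>
    calc σ j * (σ i * σ j) ^ (k+1)
        = (σ j * (σ i * σ j) ^ k) * (σ i * σ j) := by rw [pow_succ, mul_assoc]
      _ = ((σ j * σ i) ^ k * σ j) * (σ i * σ j) := by rw [ih]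
      _ = ((σ j * σ i) ^ k * (σ j * σ i)) * σ j := by simp only [mul_assoc]
      _ = (σ j * σ i) ^ (k+1) * σ j := by rw [pow_succ]

theorem pk_inv (i j : B) (k : ℕ) :
    (σ i * σ j) ^ k = ((σ j * σ i) ^ k)⁻¹ := by
  have : (σ i * σ j) = (σ j * σ i)⁻¹ := by
    rw [mul_inv_rev, cs.inv_simple, cs.inv_simple]
  rw [this, inv_pow]

theorem iter_formula (i j : B) (k : ℕ) (a : W) (ε : ZMod 2) :
    ((phiP cs i * phiP cs j) ^ k) (a, ε) =
      ((σ i * σ j) ^ k * a * (σ j * σ i) ^ k,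
        ε + ∑ e ∈ Finset.range (2 * k), if a = (σ j * σ i) ^ e * σ j then 1 else 0) := by
  induction k generalizing ε with
  | zero => simp
  | succ k ih =>
    rw [pow_succ' (phiP cs i * phiP cs j) k]
    have happ : ((phiP cs i * phiP cs j) * (phiP cs i * phiP cs j) ^ k) (a, ε)
        = (phiP cs i) ((phiP cs j) (((phiP cs i * phiP cs j) ^ k) (a, ε))) := rfl
    rw [happ, ih]
    simp only [phiP_apply, phiAux]
    have hpk := pk_inv cs i j k
    have hsjQ : σ j * ((σ j * σ i) ^ k)⁻¹ = (σ j * σ i) ^ k * σ j := by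
      rw [← hpk]; exact sj_pk cs i j k
    have hssj := cs.simple_mul_simple_self j
    refine Prod.ext ?_ ?_
    · show σ i * (σ j * ((σ i * σ j) ^ k * a * (σ j * σ i) ^ k) * σ j) * σ i
        = (σ i * σ j) ^ (k+1) * a * (σ j * σ i) ^ (k+1)
      rw [pow_succ' (σ i * σ j) k, pow_succ (σ j * σ i) k]
      simp only [mul_assoc]
    · show (ε + ∑ e ∈ Finset.range (2 * k), if a = (σ j * σ i) ^ e * σ j then 1 else 0)
            + (if (σ i * σ j) ^ k * a * (σ j * σ i) ^ k = σ j then 1 else 0)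
            + (if σ j * ((σ i * σ j) ^ k * a * (σ j * σ i) ^ k) * σ j = σ i then 1 else 0)
          = ε + ∑ e ∈ Finset.range (2 * (k+1)), if a = (σ j * σ i) ^ e * σ j then 1 else 0
      have h2k : 2 * (k+1) = (2*k) + 1 + 1 := by ring
      rw [h2k, Finset.sum_range_succ, Finset.sum_range_succ]
      have key1 : ((σ i * σ j) ^ k * a * (σ j * σ i) ^ k = σ j)
          ↔ (a = (σ j * σ i) ^ (2*k) * σ j) := by
        rw [hpk, conj_eq_iff]
        have : (σ j * σ i) ^ k * σ j * ((σ j * σ i) ^ k)⁻¹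
            = (σ j * σ i) ^ (2*k) * σ j := by
          rw [mul_assoc, hsjQ, two_mul, pow_add]
          simp only [mul_assoc]
        rw [this]
      have key2 : (σ j * ((σ i * σ j) ^ k * a * (σ j * σ i) ^ k) * σ j = σ i)
          ↔ (a = (σ j * σ i) ^ (2*k+1) * σ j) := by
        rw [hpk, invol_conj_eq_iff hssj, conj_eq_iff]
        have : (σ j * σ i) ^ k * (σ j * (σ i * σ j)) * ((σ j * σ i) ^ k)⁻¹
            = (σ j * σ i) ^ (2*k+1) * σ j := by
          calc (σ j * σ i) ^ k * (σ j * (σ i * σ j)) * ((σ j * σ i) ^ k)⁻¹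
              = ((σ j * σ i) ^ k * (σ j * σ i)) * (σ j * ((σ j * σ i) ^ k)⁻¹) := by
                simp only [mul_assoc]
            _ = ((σ j * σ i) ^ k * (σ j * σ i)) * ((σ j * σ i) ^ k * σ j) := by rw [hsjQ]
            _ = (σ j * σ i) ^ (k+1) * ((σ j * σ i) ^ k * σ j) := by rw [pow_succ]
            _ = ((σ j * σ i) ^ (k+1) * (σ j * σ i) ^ k) * σ j := by simp only [mul_assoc]
            _ = (σ j * σ i) ^ (2*k+1) * σ j := by rw [← pow_add]; congr 2; omega
        rw [show σ j * σ i * σ j = σ j * (σ i * σ j) by simp only [mul_assoc], this]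
      rw [if_congr key1 rfl rfl, if_congr key2 rfl rfl]
      ring

theorem phi_liftable : CoxeterMatrix.IsLiftable M (fun i => (phiP cs i : Equiv.Perm (W × ZMod 2))) := by
  intro i j
  have hq : ((σ j * σ i) ^ (M i j) : W) = 1 := cs.simple_mul_simple_pow' i j
  have hp : ((σ i * σ j) ^ (M i j) : W) = 1 := cs.simple_mul_simple_pow i j
  apply Equiv.ext
  rintro ⟨a, ε⟩
  rw [Equiv.Perm.one_apply, iter_formula cs i j (M i j) a ε, hp, hq]
  have hsum : ∑ e ∈ Finset.range (2 * (M i j)),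
      (if a = (σ j * σ i) ^ e * σ j then (1 : ZMod 2) else 0) = 0 := by
    rw [two_mul, Finset.sum_range_add]
    have heq : ∀ e ∈ Finset.range (M i j),
        (if a = (σ j * σ i) ^ (M i j + e) * σ j then (1 : ZMod 2) else 0)
        = (if a = (σ j * σ i) ^ e * σ j then (1 : ZMod 2) else 0) := by
      intro e _
      rw [pow_add, hq, one_mul]
    rw [Finset.sum_congr rfl heq]
    have : ∀ x : ZMod 2, x + x = 0 := by decide
    exact this _
  rw [hsum, add_zero, one_mul, mul_one]

/-- The sign representation of the Coxeter group. -/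
noncomputable def theta : W →* Equiv.Perm (W × ZMod 2) :=
  cs.lift ⟨fun i => phiP cs i, phi_liftable cs⟩

theorem theta_simple (i : B) : theta cs (σ i) = phiP cs i :=
  cs.lift_apply_simple (phi_liftable cs) i

theorem theta_wordProd (ω : List B) (a : W) (ε : ZMod 2) :
    theta cs (π ω) (a, ε) = (π ω * a * (π ω)⁻¹, ε + ((cs.rightInvSeq ω).count a : ZMod 2)) := by
  induction ω generalizing ε with
  | nil => simp [theta]
  | cons i τ ih =>
    rw [cs.wordProd_cons, map_mul]
    have happ : (theta cs (σ i) * theta cs (π τ)) (a, ε)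
        = theta cs (σ i) (theta cs (π τ) (a, ε)) := rfl
    rw [happ, ih, theta_simple, phiP_apply]
    simp only [phiAux]
    have hris : cs.rightInvSeq (i :: τ) = ((π τ)⁻¹ * σ i * π τ) :: cs.rightInvSeq τ := rfl
    refine Prod.ext ?_ ?_
    · show σ i * (π τ * a * (π τ)⁻¹) * σ i = (σ i * π τ) * a * (σ i * π τ)⁻¹
      rw [mul_inv_rev, cs.inv_simple]
      simp only [mul_assoc]
    · show (ε + ((cs.rightInvSeq τ).count a : ZMod 2)) + (if π τ * a * (π τ)⁻¹ = σ i then 1 else 0)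
          = ε + (((cs.rightInvSeq (i :: τ)).count a : ZMod 2))
      rw [hris]
      have hiff : (π τ * a * (π τ)⁻¹ = σ i) ↔ (a = (π τ)⁻¹ * σ i * π τ) := by
        constructor
        · intro hh; rw [← hh]; group
        · intro hh; rw [hh]; group
      rw [List.count_cons]
      by_cases hc : (((π τ)⁻¹ * σ i * π τ : W)) = a
      · rw [if_pos (hiff.mpr hc.symm), if_pos (by simpa using hc)]
        push_cast
        ring
      · rw [if_neg (fun hcc => hc (hiff.mp hcc).symm), if_neg (by simpa using hc)]
        push_cast
        ring


/-- The sign cocycle. -/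
noncomputable def nu (w a : W) : ZMod 2 := (theta cs w (a, 0)).2

theorem nu_wordProd (ω : List B) (a : W) :
    nu cs (π ω) a = ((cs.rightInvSeq ω).count a : ZMod 2) := by
  rw [nu, theta_wordProd, zero_add]

theorem theta_apply (w a : W) (ε : ZMod 2) :
    theta cs w (a, ε) = (w * a * w⁻¹, ε + nu cs w a) := by
  obtain ⟨ω, _, rfl⟩ := cs.exists_reduced_word' w
  rw [theta_wordProd, nu_wordProd]

theorem nu_mul (u v a : W) : nu cs (u * v) a = nu cs v a + nu cs u (v * a * v⁻¹) := by
  have : theta cs (u * v) (a, 0) = theta cs u (theta cs v (a, 0)) := by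
    rw [map_mul]; rfl
  rw [nu, this, theta_apply cs v a 0, theta_apply, zero_add]

theorem nu_one (a : W) : nu cs 1 a = 0 := by
  rw [nu, map_one]; rfl

theorem nu_inv_conj (u a : W) : nu cs u⁻¹ (u * a * u⁻¹) = nu cs u a := by
  have h0 : nu cs (u⁻¹ * u) a = 0 := by rw [inv_mul_cancel, nu_one]
  rw [nu_mul] at h0
  have : ∀ x y : ZMod 2, x + y = 0 → y = x := by decide
  exact this _ _ h0

theorem nu_simple_self (i : B) : nu cs (σ i) (σ i) = 1 := by
  have h := nu_wordProd cs [i] (σ i)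
  have hπ : π [i] = σ i := by simp [wordProd]
  have hris : cs.rightInvSeq [i] = [σ i] := by
    simp [cs.rightInvSeq_singleton]
  rw [hπ, hris] at h
  rw [h]
  simp

theorem nu_reflection_self {t : W} (ht : cs.IsReflection t) : nu cs t t = 1 := by
  obtain ⟨u, i, rfl⟩ := ht
  have h1 : (u * σ i * u⁻¹ : W) = (u * σ i) * u⁻¹ := by group
  rw [h1, nu_mul]
  have h2 : u⁻¹ * (u * σ i * u⁻¹) * u⁻¹⁻¹ = σ i := by group
  rw [h2, nu_mul]
  have h3 : σ i * σ i * (σ i)⁻¹ = σ i := by group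
  rw [h3, nu_simple_self]
  have h4 : nu cs u⁻¹ (u * σ i * u⁻¹) = nu cs u (σ i) := nu_inv_conj cs u (σ i)
  rw [h4]
  have : ∀ x : ZMod 2, x + (1 + x) = 1 := by decide
  exact this _

theorem nu_of_isRightInversion {w t : W} (ht : cs.IsReflection t)
    (hlt : ℓ (w * t) < ℓ w) : nu cs w t = 1 := by
  have htt : t * t = 1 := ht.mul_self
  have hw : w = (w * t) * t := by rw [mul_assoc, htt, mul_one]
  have h1 : nu cs ((w * t) * t) t = nu cs t t + nu cs (w * t) (t * t * t⁻¹) := nu_mul cs _ _ _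
  have h2 : t * t * t⁻¹ = t := by rw [htt, one_mul, ht.inv]
  have h3 : nu cs (w * t) t = 0 := by
    by_contra hne
    have hone : nu cs (w * t) t = 1 := by
      have : ∀ x : ZMod 2, x ≠ 0 → x = 1 := by decide
      exact this _ hne
    obtain ⟨τ, hτred, hτ⟩ := cs.exists_reduced_word' (w * t)
    rw [hτ, nu_wordProd] at hone
    have hcount : (cs.rightInvSeq τ).count t ≠ 0 := by
      intro hz
      rw [hz] at hone
      simp at hone
    have hmem : t ∈ cs.rightInvSeq τ := by
      rw [← List.count_pos_iff]
      omega
    have hinv := cs.isRightInversion_of_mem_rightInvSeq hτred hmem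
    have : ℓ (w * t * t) < ℓ (w * t) := by rw [hτ]; exact hinv.2
    rw [mul_assoc, htt, mul_one] at this
    omega
  rw [hw, h1, h2, h3, nu_reflection_self cs ht, add_zero]

/-- Strong exchange, index form (right multiplication), for arbitrary words. -/
theorem strong_exchange_right (ω : List B) {t : W} (ht : cs.IsReflection t)
    (hlt : ℓ (π ω * t) < ℓ (π ω)) :
    ∃ k, k < ω.length ∧ π (ω.eraseIdx k) = π ω * t := by
  have h1 : nu cs (π ω) t = 1 := nu_of_isRightInversion cs ht hlt
  rw [nu_wordProd] at h1
  have hcount : (cs.rightInvSeq ω).count t ≠ 0 := by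
    intro hz; rw [hz] at h1; simp at h1
  have hmem : t ∈ cs.rightInvSeq ω := by
    rw [← List.count_pos_iff]; omega
  obtain ⟨k, hk, hget⟩ := List.getElem_of_mem hmem
  have hklen : k < ω.length := by
    have := cs.length_rightInvSeq ω
    omega
  refine ⟨k, hklen, ?_⟩
  have hgetD : (cs.rightInvSeq ω).getD k 1 = t := by
    rw [List.getD_eq_getElem _ _ hk, hget]
  rw [← hgetD]
  exact (cs.wordProd_mul_getD_rightInvSeq ω k).symm

/-- Strong exchange, sublist form (right). -/
theorem strong_exchange_right' (ω : List B) {t : W} (ht : cs.IsReflection t)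
    (hlt : ℓ (π ω * t) < ℓ (π ω)) :
    ∃ ω', ω' <+ ω ∧ ω'.length + 1 = ω.length ∧ π ω' = π ω * t := by
  obtain ⟨k, hk, heq⟩ := strong_exchange_right cs ω ht hlt
  exact ⟨ω.eraseIdx k, List.eraseIdx_sublist ω k, List.length_eraseIdx_add_one hk, heq⟩

/-- Strong exchange, sublist form (left). -/
theorem strong_exchange_left' (ω : List B) {t : W} (ht : cs.IsReflection t)
    (hlt : ℓ (t * π ω) < ℓ (π ω)) :
    ∃ ω', ω' <+ ω ∧ ω'.length + 1 = ω.length ∧ π ω' = t * π ω := by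
  have hrev : π (ω.reverse) = (π ω)⁻¹ := cs.wordProd_reverse ω
  have hlt' : ℓ (π (ω.reverse) * t) < ℓ (π (ω.reverse)) := by
    rw [hrev]
    have h1 : ((π ω)⁻¹ * t : W) = (t * π ω)⁻¹ := by
      rw [mul_inv_rev, ht.inv]
    rw [h1, cs.length_inv, cs.length_inv]
    exact hlt
  obtain ⟨ω'', hsub, hlen, heq⟩ := strong_exchange_right' cs ω.reverse ht hlt'
  refine ⟨ω''.reverse, ?_, ?_, ?_⟩
  · have := hsub.reverse
    rwa [List.reverse_reverse] at this
  · rw [List.length_reverse]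
    rw [List.length_reverse] at hlen
    exact hlen
  · rw [cs.wordProd_reverse, heq, hrev, mul_inv_rev, inv_inv, ht.inv]

/-- Deletion property: any word has a reduced sublist with the same product. -/
theorem deletion (ω : List B) :
    ∃ ω', ω' <+ ω ∧ π ω' = π ω ∧ cs.IsReduced ω' := by
  induction ω with
  | nil => exact ⟨[], List.Sublist.refl [], rfl, by simp [CoxeterSystem.IsReduced]⟩
  | cons c τ ih =>
    obtain ⟨τ', hsub, hprod, hred⟩ := ih
    rcases cs.length_simple_mul (π τ') c with hup | hdown
    · refine ⟨c :: τ', hsub.cons₂ c, ?_, ?_⟩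
      · rw [cs.wordProd_cons, cs.wordProd_cons, hprod]
      · show ℓ (π (c :: τ')) = (c :: τ').length
        rw [cs.wordProd_cons, hup, List.length_cons]
        rw [CoxeterSystem.IsReduced] at hred
        omega
    · have hlt : ℓ (σ c * π τ') < ℓ (π τ') := by omega
      obtain ⟨ω', hsub', hlen', heq'⟩ :=
        strong_exchange_left' cs τ' (cs.isReflection_simple c) hlt
      refine ⟨ω', (hsub'.trans hsub).cons c, ?_, ?_⟩
      · rw [heq', cs.wordProd_cons, hprod]
      · show ℓ (π ω') = ω'.length
        rw [heq']
        rw [CoxeterSystem.IsReduced] at hred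
        omega


/-- Chain (Bruhat) order: right multiplication by reflections, increasing length. -/
def cle (x w : W) : Prop :=
  Relation.ReflTransGen (fun a b => (∃ t, cs.IsReflection t ∧ b = a * t) ∧ ℓ a < ℓ b) x w

theorem cle_refl (x : W) : cle cs x x := Relation.ReflTransGen.refl

theorem cle_trans {x y z : W} (h1 : cle cs x y) (h2 : cle cs y z) : cle cs x z :=
  Relation.ReflTransGen.trans h1 h2

theorem cle_step {x y : W} {t : W} (ht : cs.IsReflection t) (heq : y = x * t)
    (hlt : ℓ x < ℓ y) : cle cs x y :=
  Relation.ReflTransGen.single ⟨⟨t, ht, heq⟩, hlt⟩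

theorem length_lt_of_cle {x w : W} (h : cle cs x w) : x = w ∨ ℓ x < ℓ w := by
  induction h with
  | refl => exact Or.inl rfl
  | tail _ hstep ih =>
    right
    rcases ih with rfl | hlt
    · exact hstep.2
    · exact hlt.trans hstep.2

/-- Lifting lemma (Property Z) for the chain order. -/
theorem cle_lemmaA {x v : W} (j : B) (h : cle cs x v) :
    cle cs (x * σ j) v ∨ cle cs (x * σ j) (v * σ j) := by
  induction h with
  | refl => exact Or.inr (cle_refl cs _)
  | @tail u v huv hstep ih =>
    obtain ⟨⟨t, ht, rfl⟩, hlen⟩ := hstep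
    rcases ih with h1 | h2
    · exact Or.inl (h1.tail ⟨⟨t, ht, rfl⟩, hlen⟩)
    · -- h2 : cle (x * σ j) (u * σ j)
      by_cases hc : ℓ (u * σ j) < ℓ (u * t * σ j)
      · right
        refine h2.tail ⟨⟨σ j * t * σ j, ?_, ?_⟩, hc⟩
        · have := ht.conj (σ j)
          rwa [cs.inv_simple] at this
        · simp only [mul_assoc, cs.simple_mul_simple_cancel_left]
      · -- bad configuration
        have hparity : ℓ (u * t) % 2 ≠ ℓ u % 2 := by
          have hmod := cs.length_mul_mod_two u t
          have hodd : ℓ t % 2 = 1 := Nat.odd_iff.mp ht.odd_length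
          omega
        have hus := cs.length_mul_simple u j
        have hvs := cs.length_mul_simple (u * t) j
        -- pin down bad configuration
        have husq : ℓ (u * σ j) = ℓ u + 1 := by
          rcases hus with h' | h'
          · exact h'
          · exfalso
            rcases hvs with h'' | h'' <;> omega
        have hveq : ℓ (u * t) = ℓ u + 1 := by
          rcases hvs with h'' | h'' <;> omega
        have hvseq : ℓ (u * t * σ j) = ℓ u := by
          rcases hvs with h'' | h'' <;> omega
        -- strong exchange on the reduced word of u*σj
        obtain ⟨ωu, hred, hω⟩ := cs.exists_reduced_word' u
        have hredlen : ωu.length = ℓ u := by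
          rw [CoxeterSystem.IsReduced] at hred
          rw [← hred, ← hω]
        have hπconc : π (ωu ++ [j]) = u * σ j := by
          rw [cs.wordProd_append, ← hω]
          simp [wordProd]
        have hr : cs.IsReflection (σ j * t * σ j) := by
          have := ht.conj (σ j)
          rwa [cs.inv_simple] at this
        have hlt2 : ℓ (π (ωu ++ [j]) * (σ j * t * σ j)) < ℓ (π (ωu ++ [j])) := by
          rw [hπconc]
          have : u * σ j * (σ j * t * σ j) = u * t * σ j := by
            simp only [mul_assoc, cs.simple_mul_simple_cancel_left]
          rw [this, husq, hvseq]
          omega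
        obtain ⟨k, hk, heq⟩ := strong_exchange_right cs (ωu ++ [j]) hr hlt2
        have husr : u * σ j * (σ j * t * σ j) = u * t * σ j := by
          simp only [mul_assoc, cs.simple_mul_simple_cancel_left]
        rw [hπconc, husr] at heq
        rcases Nat.lt_or_ge k ωu.length with hklt | hkge
        · -- k inside ωu : contradiction
          exfalso
          rw [List.eraseIdx_append_of_lt_length hklt] at heq
          have hπer : π (ωu.eraseIdx k ++ [j]) = π (ωu.eraseIdx k) * σ j := by
            rw [cs.wordProd_append]
            simp [wordProd]
          rw [hπer] at heq
          have hcancel : π (ωu.eraseIdx k) = u * t := by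
            have h5 : π (ωu.eraseIdx k) * σ j * σ j = u * t * σ j * σ j := by rw [heq]
            rwa [cs.simple_mul_simple_cancel_right, cs.simple_mul_simple_cancel_right] at h5
          have hlenle : ℓ (π (ωu.eraseIdx k)) ≤ (ωu.eraseIdx k).length :=
            cs.length_wordProd_le _
          have : (ωu.eraseIdx k).length + 1 = ωu.length := List.length_eraseIdx_add_one hklt
          rw [hcancel] at hlenle
          omega
        · -- k is the last position: u * t * σ j = u, i.e. u * t = u * σ j
          have hkeq : k = ωu.length := by
            have : (ωu ++ [j]).length = ωu.length + 1 := by simp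
            omega
          rw [List.eraseIdx_append_of_length_le (le_of_eq hkeq.symm)] at heq
          have : (([j] : List B).eraseIdx (k - ωu.length)) = [] := by
            rw [hkeq]
            simp
          rw [this, List.append_nil] at heq
          rw [← hω] at heq
          -- heq : u = u * t * σ j
          have hveq2 : u * t = u * σ j := by
            have := congrArg (fun z => z * σ j) heq
            rw [mul_assoc (u*t), cs.simple_mul_simple_self, mul_one] at this
            exact this.symm
          left
          rw [hveq2]
          exact h2

/-- Subwords of reduced words are below in the chain order. -/
theorem cle_of_subword : ∀ (ω : List B), cs.IsReduced ω → ∀ (χ : List B), χ <+ ω →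
    cle cs (π χ) (π ω) := by
  intro ω
  induction ω using List.reverseRecOn with
  | nil =>
    intro _ χ hχ
    rw [List.sublist_nil.mp hχ]
    exact cle_refl cs _
  | append_singleton α j ih =>
    intro hred χ hχ
    have hα : cs.IsReduced α := by
      have := hred.take α.length
      rwa [List.take_left] at this
    have hπ : π (α ++ [j]) = π α * σ j := by
      rw [cs.wordProd_append]; simp [wordProd]
    have hlen : ℓ (π α * σ j) = ℓ (π α) + 1 := by
      have h1 : ℓ (π (α ++ [j])) = α.length + 1 := by
        rw [CoxeterSystem.IsReduced] at hred
        rw [hred]; simp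
      have h2 : ℓ (π α) = α.length := hα
      rw [← hπ, h1, h2]
    -- split the sublist
    have hsplit : χ <+ α ∨ ∃ χ', χ = χ' ++ [j] ∧ χ' <+ α := by
      have hrev : χ.reverse <+ j :: α.reverse := by
        have := hχ.reverse
        rwa [List.reverse_append, List.reverse_singleton, List.singleton_append] at this
      rcases List.sublist_cons_iff.mp hrev with h | ⟨r, hr, hrsub⟩
      · left
        have := h.reverse
        simpa only [List.reverse_reverse] using this
      · right
        refine ⟨r.reverse, ?_, ?_⟩
        · have := congrArg List.reverse hr
          simpa only [List.reverse_reverse, List.reverse_cons] using this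
        · have := hrsub.reverse
          simpa only [List.reverse_reverse] using this
    rcases hsplit with hsub | ⟨χ', rfl, hsub⟩
    · have h1 := ih hα χ hsub
      refine h1.trans ?_
      rw [hπ]
      exact cle_step cs (cs.isReflection_simple j) rfl (by omega)
    · have h1 := ih hα χ' hsub
      have hπχ : π (χ' ++ [j]) = π χ' * σ j := by
        rw [cs.wordProd_append]; simp [wordProd]
      rcases cle_lemmaA cs j h1 with h2 | h2
      · rw [hπχ, hπ]
        refine h2.trans ?_
        exact cle_step cs (cs.isReflection_simple j) rfl (by omega)
      · rw [hπχ, hπ]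
        exact h2

/-- Chain order implies subword of every reduced word. -/
theorem subword_of_cle : ∀ (n : ℕ) {x w : W}, ℓ w ≤ n → cle cs x w →
    ∀ (ω : List B), cs.IsReduced ω → π ω = w → ∃ χ, χ <+ ω ∧ π χ = x := by
  intro n
  induction n with
  | zero =>
    intro x w hw h ω hred hπ
    rcases Relation.ReflTransGen.cases_tail h with rfl | ⟨u, hxu, hstep⟩
    · exact ⟨ω, List.Sublist.refl ω, hπ⟩
    · exfalso
      have := hstep.2
      omega
  | succ n ihn =>
    intro x w hw h ω hred hπ
    rcases Relation.ReflTransGen.cases_tail h with rfl | ⟨u, hxu, hstep⟩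
    · exact ⟨ω, List.Sublist.refl ω, hπ⟩
    · obtain ⟨⟨t, ht, rfl⟩, hlt⟩ := hstep
      -- w = u * t
      have hu : π ω * t = u := by
        rw [hπ, mul_assoc, ht.mul_self, mul_one]
      have hlt2 : ℓ (π ω * t) < ℓ (π ω) := by
        rw [hu, hπ]
        exact hlt
      obtain ⟨k, hk, heq⟩ := strong_exchange_right cs ω ht hlt2
      obtain ⟨ωr, hsub2, hπ2, hred2⟩ := deletion cs (ω.eraseIdx k)
      have hπ3 : π ωr = u := by rw [hπ2, heq, hu]
      have hulen : ℓ u ≤ n := by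
        have : ℓ (u * t) ≤ n + 1 := hw
        omega
      obtain ⟨χ, hχ, hχπ⟩ := ihn hulen hxu ωr hred2 hπ3
      exact ⟨χ, hχ.trans (hsub2.trans (List.eraseIdx_sublist ω k)), hχπ⟩

theorem bruhatLE_iff_cle {x w : W} : cs.bruhatLE x w ↔ cle cs x w := by
  constructor
  · rintro ⟨ω, rfl, hred, χ, hsub, rfl⟩
    exact cle_of_subword cs ω hred χ hsub
  · intro h
    obtain ⟨ω, hred, rfl⟩ := cs.exists_reduced_word' w
    obtain ⟨χ, hsub, hπ⟩ := subword_of_cle cs (ℓ (π ω)) le_rfl h ω hred rfl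
    exact ⟨ω, rfl, hred, χ, hsub, hπ⟩

/-- Word independence: transport a subword witness to any reduced word. -/
theorem bruhat_subword_of_reduced {x w : W} (h : cs.bruhatLE x w)
    {ω : List B} (hred : cs.IsReduced ω) (hπ : π ω = w) :
    ∃ χ, χ <+ ω ∧ π χ = x := by
  rw [bruhatLE_iff_cle] at h
  exact subword_of_cle cs (ℓ w) le_rfl h ω hred hπ


theorem sublist_concat_split {A : Type*} {χ αl : List A} {j : A} (h : χ <+ αl ++ [j]) :
    χ <+ αl ∨ ∃ χ', χ = χ' ++ [j] ∧ χ' <+ αl := by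
  have hrev : χ.reverse <+ j :: αl.reverse := by
    have := h.reverse
    rwa [List.reverse_append, List.reverse_singleton, List.singleton_append] at this
  rcases List.sublist_cons_iff.mp hrev with h' | ⟨r, hr, hrsub⟩
  · left
    have := h'.reverse
    simpa only [List.reverse_reverse] using this
  · right
    refine ⟨r.reverse, ?_, ?_⟩
    · have := congrArg List.reverse hr
      simpa only [List.reverse_reverse, List.reverse_cons] using this
    · have := hrsub.reverse
      simpa only [List.reverse_reverse] using this

theorem bruhat_refl (w : W) : cs.bruhatLE w w := by
  obtain ⟨ω, hred, rfl⟩ := cs.exists_reduced_word' w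
  exact ⟨ω, rfl, hred, ω, List.Sublist.refl ω, rfl⟩

theorem bruhat_prepend {v x : W} {i : B} (h : ℓ (σ i * v) = ℓ v + 1)
    (hx : cs.bruhatLE x v) :
    cs.bruhatLE x (σ i * v) ∧ cs.bruhatLE (σ i * x) (σ i * v) := by
  obtain ⟨ω, rfl, hred, χ, hsub, rfl⟩ := hx
  have hπ : π (i :: ω) = σ i * π ω := cs.wordProd_cons i ω
  have hred2 : cs.IsReduced (i :: ω) := by
    show ℓ (π (i :: ω)) = (i :: ω).length
    rw [hπ, h, List.length_cons]
    rw [CoxeterSystem.IsReduced] at hred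
    omega
  constructor
  · exact ⟨i :: ω, hπ, hred2, χ, hsub.cons i, rfl⟩
  · exact ⟨i :: ω, hπ, hred2, i :: χ, hsub.cons₂ i, cs.wordProd_cons i χ⟩

theorem bruhat_append {v x : W} {j : B} (h : ℓ (v * σ j) = ℓ v + 1)
    (hx : cs.bruhatLE x v) :
    cs.bruhatLE x (v * σ j) ∧ cs.bruhatLE (x * σ j) (v * σ j) := by
  obtain ⟨ω, rfl, hred, χ, hsub, rfl⟩ := hx
  have hπ : ∀ ρ : List B, π (ρ ++ [j]) = π ρ * σ j := by
    intro ρ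
    rw [cs.wordProd_append]
    simp [wordProd]
  have hred2 : cs.IsReduced (ω ++ [j]) := by
    show ℓ (π (ω ++ [j])) = (ω ++ [j]).length
    rw [hπ, h, List.length_append]
    rw [CoxeterSystem.IsReduced] at hred
    simp
    omega
  constructor
  · exact ⟨ω ++ [j], hπ ω, hred2, χ, hsub.trans (List.sublist_append_left ω [j]), rfl⟩
  · exact ⟨ω ++ [j], hπ ω, hred2, χ ++ [j],
      hsub.append (List.Sublist.refl [j]), hπ χ⟩

theorem pkey_right {v x : W} {j : B} (hx : cs.bruhatLE x v) (h : ℓ (x * σ j) < ℓ x) :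
    cs.bruhatLE (x * σ j) v := by
  obtain ⟨ω, rfl, hred, χ, hsub, rfl⟩ := hx
  obtain ⟨k, hk, heq⟩ := strong_exchange_right cs χ (cs.isReflection_simple j) h
  exact ⟨ω, rfl, hred, χ.eraseIdx k, (List.eraseIdx_sublist χ k).trans hsub, heq⟩

theorem pkey_left {v x : W} {i : B} (hx : cs.bruhatLE x v) (h : ℓ (σ i * x) < ℓ x) :
    cs.bruhatLE (σ i * x) v := by
  obtain ⟨ω, rfl, hred, χ, hsub, rfl⟩ := hx
  obtain ⟨ω', hsub', _, heq⟩ := strong_exchange_left' cs χ (cs.isReflection_simple i) h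
  exact ⟨ω, rfl, hred, ω', hsub'.trans hsub, heq⟩

theorem bruhat_inv {v x : W} (hx : cs.bruhatLE x v) : cs.bruhatLE x⁻¹ v⁻¹ := by
  obtain ⟨ω, rfl, hred, χ, hsub, rfl⟩ := hx
  exact ⟨ω.reverse, cs.wordProd_reverse ω, (cs.isReduced_reverse_iff ω).mpr hred,
    χ.reverse, hsub.reverse, cs.wordProd_reverse χ⟩

theorem Z_right {v x : W} {j : B} (hw : ℓ (v * σ j) < ℓ v) (hx : cs.bruhatLE x v) :
    cs.bruhatLE x (v * σ j) ∨ (ℓ (x * σ j) < ℓ x ∧ cs.bruhatLE (x * σ j) (v * σ j)) := by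
  have hv1 : ℓ (v * σ j) + 1 = ℓ v := by
    rcases cs.length_mul_simple v j with h' | h' <;> omega
  obtain ⟨ζ, hζred, hζ⟩ := cs.exists_reduced_word' (v * σ j)
  have hζlen : ζ.length = ℓ (v * σ j) := by
    rw [CoxeterSystem.IsReduced] at hζred
    rw [← hζred, ← hζ]
  have hπj : π [j] = σ j := by simp [CoxeterSystem.wordProd]
  have hπζj : π (ζ ++ [j]) = v := by
    rw [cs.wordProd_append, hπj, ← hζ, mul_assoc, cs.simple_mul_simple_self, mul_one]
  have hredζj : cs.IsReduced (ζ ++ [j]) := by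
    show ℓ (π (ζ ++ [j])) = (ζ ++ [j]).length
    rw [hπζj]
    simp
    omega
  obtain ⟨χ, hsub, hπχ⟩ := bruhat_subword_of_reduced cs hx hredζj hπζj
  rcases sublist_concat_split hsub with hsubζ | ⟨χ', rfl, hsub'⟩
  · exact Or.inl ⟨ζ, hζ.symm, hζred, χ, hsubζ, hπχ⟩
  · have hπχ' : π χ' = x * σ j := by
      have h5 : π χ' * σ j = x := by
        rw [← hπχ, cs.wordProd_append]
        simp [wordProd]
      rw [← h5, cs.simple_mul_simple_cancel_right]
    have hb : cs.bruhatLE (x * σ j) (v * σ j) := ⟨ζ, hζ.symm, hζred, χ', hsub', hπχ'⟩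
    rcases cs.length_mul_simple x j with h' | h'
    · -- length goes up: go back down
      left
      have hdown : ℓ ((x * σ j) * σ j) < ℓ (x * σ j) := by
        rw [cs.simple_mul_simple_cancel_right]
        omega
      have := pkey_right cs hb hdown
      rwa [cs.simple_mul_simple_cancel_right] at this
    · exact Or.inr ⟨by omega, hb⟩

theorem Z_left {v x : W} {i : B} (hw : ℓ (σ i * v) < ℓ v) (hx : cs.bruhatLE x v) :
    cs.bruhatLE x (σ i * v) ∨ (ℓ (σ i * x) < ℓ x ∧ cs.bruhatLE (σ i * x) (σ i * v)) := by
  have hxinv := bruhat_inv cs hx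
  have hkey : (v⁻¹ * σ i : W) = (σ i * v)⁻¹ := by
    rw [mul_inv_rev, cs.inv_simple]
  have hw' : ℓ (v⁻¹ * σ i) < ℓ v⁻¹ := by
    rw [hkey, cs.length_inv, cs.length_inv]
    exact hw
  rcases Z_right cs hw' hxinv with hA | ⟨hl, hA⟩
  · left
    have := bruhat_inv cs hA
    rwa [inv_inv, hkey, inv_inv] at this
  · right
    constructor
    · have hh : (x⁻¹ * σ i : W) = (σ i * x)⁻¹ := by rw [mul_inv_rev, cs.inv_simple]
      rw [hh, cs.length_inv, cs.length_inv] at hl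
      exact hl
    · have := bruhat_inv cs hA
      have hh : (x⁻¹ * σ i : W) = (σ i * x)⁻¹ := by rw [mul_inv_rev, cs.inv_simple]
      rwa [hh, hkey, inv_inv, inv_inv] at this

theorem dichotomy {w : W} {i j : B} (h1 : ℓ (σ i * w) = ℓ w + 1)
    (h2 : ℓ (w * σ j) = ℓ w + 1) (h3 : ℓ (σ i * w * σ j) ≤ ℓ w) :
    σ i * w * σ j = w := by
  obtain ⟨ωw, hred, hω⟩ := cs.exists_reduced_word' w
  have hωlen : ωw.length = ℓ w := by
    rw [CoxeterSystem.IsReduced] at hred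
    rw [← hred, ← hω]
  have hπ : π (i :: ωw) = σ i * w := by rw [cs.wordProd_cons, ← hω]
  have hlt : ℓ (π (i :: ωw) * σ j) < ℓ (π (i :: ωw)) := by
    rw [hπ]
    calc ℓ (σ i * w * σ j) ≤ ℓ w := h3
    _ < ℓ (σ i * w) := by omega
  obtain ⟨k, hk, heq⟩ := strong_exchange_right cs (i :: ωw) (cs.isReflection_simple j) hlt
  rw [hπ] at heq
  match k, hk with
  | 0, _ =>
    rw [List.eraseIdx_cons_zero, ← hω] at heq
    exact heq.symm
  | (k' + 1), hk =>
    exfalso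
    rw [List.eraseIdx_cons_succ, cs.wordProd_cons] at heq
    have hcancel : π (ωw.eraseIdx k') = w * σ j := by
      have h5 : σ i * (σ i * π (ωw.eraseIdx k')) = σ i * (σ i * w * σ j) := by rw [heq]
      rw [cs.simple_mul_simple_cancel_left] at h5
      rw [h5, ← mul_assoc, cs.simple_mul_simple_cancel_left]
    have hk' : k' < ωw.length := by
      simp at hk
      omega
    have hle : ℓ (π (ωw.eraseIdx k')) ≤ (ωw.eraseIdx k').length := cs.length_wordProd_le _
    have hlen' : (ωw.eraseIdx k').length + 1 = ωw.length := List.length_eraseIdx_add_one hk'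
    rw [hcancel] at hle
    omega

end CoxKR

/-- One-step monotonicity of `⪯_σ`: if `w' = s w σ(s)` with `ℓ(w') ≤ ℓ(w)` (a single
twisted-conjugation step) and some minimal length element of the σ-conjugacy class `O`
(of `o`) is `≤ w'` in Bruhat order, then some minimal length element of `O` is `≤ w`. -/
theorem preceq_step {B W : Type*} [Group W] {M : CoxeterMatrix B}
    (cs : CoxeterSystem M W) (σ : W ≃* W)
    (hσ : ∀ i : B, ∃ j : B, σ (cs.simple i) = cs.simple j)
    (o w w' : W) (i : B)
    (hstep : w' = cs.simple i * w * σ (cs.simple i))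
    (hlen : cs.length w' ≤ cs.length w)
    (h : ∃ x : W, minLenIn cs σ o x ∧ cs.bruhatLE x w') :
    ∃ y : W, minLenIn cs σ o y ∧ cs.bruhatLE y w := by
  classical
  obtain ⟨j, hj⟩ := hσ i
  obtain ⟨x, hxmin, hxle⟩ := h
  rw [hj] at hstep
  -- σ-conjugation by the simple reflection i
  have hσconj : ∀ z : W, sigmaConj σ z o → sigmaConj σ (cs.simple i * z * cs.simple j) o := by
    rintro z ⟨g, rfl⟩
    refine ⟨cs.simple i * g, ?_⟩
    rw [map_mul, hj, mul_inv_rev, cs.inv_simple]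
    simp only [mul_assoc]
  have hmk : ∀ y : W, sigmaConj σ y o → cs.length y ≤ cs.length x → minLenIn cs σ o y :=
    fun y hc hl => ⟨hc, fun z hz => le_trans hl (hxmin.2 z hz)⟩
  have hsimple_mul_bound : ∀ (z : W) (a : B), cs.length (cs.simple a * z) ≤ cs.length z + 1 := by
    intro z a
    rcases cs.length_simple_mul z a with h' | h' <;> omega
  rcases cs.length_simple_mul w i with hup | hdown
  · -- C2 : ℓ(s_i w) = ℓ w + 1
    have hw'down : cs.length w' + 1 = cs.length (cs.simple i * w) := by
      rcases cs.length_mul_simple (cs.simple i * w) j with h' | h'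
      · exfalso
        rw [← hstep] at h'
        omega
      · rw [← hstep] at h'
        omega
    rcases cs.length_mul_simple w j with h2up | h2down
    · -- C2b : tricky case, w' = w
      have hmain : cs.simple i * w * cs.simple j = w :=
        CoxKR.dichotomy cs hup h2up (by rw [← hstep]; exact hlen)
      refine ⟨x, hxmin, ?_⟩
      rwa [hstep, hmain] at hxle
    · -- C2a : ℓ(w s_j) = ℓ w - 1
      have hkey : cs.simple i * w' = w * cs.simple j := by
        rw [hstep, ← mul_assoc, cs.simple_mul_simple_cancel_left]
      have hZl : cs.length (cs.simple i * w') < cs.length w' := by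
        rw [hkey]
        omega
      have happ : cs.length ((w * cs.simple j) * cs.simple j) = cs.length (w * cs.simple j) + 1 := by
        rw [cs.simple_mul_simple_cancel_right]
        omega
      rcases CoxKR.Z_left cs hZl hxle with hA | ⟨hlx, hA⟩
      · rw [hkey] at hA
        have := (CoxKR.bruhat_append cs happ hA).1
        rw [cs.simple_mul_simple_cancel_right] at this
        exact ⟨x, hxmin, this⟩
      · rw [hkey] at hA
        have hres := (CoxKR.bruhat_append cs happ hA).2
        rw [cs.simple_mul_simple_cancel_right] at hres
        refine ⟨cs.simple i * x * cs.simple j, hmk _ (hσconj x hxmin.1) ?_, ?_⟩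
        · calc cs.length (cs.simple i * x * cs.simple j)
              ≤ cs.length (cs.simple i * x) + 1 := by
                rcases cs.length_mul_simple (cs.simple i * x) j with h' | h' <;> omega
          _ ≤ cs.length x := by omega
        · exact hres
  · -- C1 : ℓ(s_i w) = ℓ w - 1
    rcases cs.length_mul_simple (cs.simple i * w) j with hwup | hwdown
    · -- C1a : ℓ w' = ℓ w
      have hcanc : w' * cs.simple j = cs.simple i * w := by
        rw [hstep, cs.simple_mul_simple_cancel_right]
      have hZr : cs.length (w' * cs.simple j) < cs.length w' := by
        rw [hcanc, hstep]
        omega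
      have hpre : cs.length (cs.simple i * (cs.simple i * w)) = cs.length (cs.simple i * w) + 1 := by
        rw [cs.simple_mul_simple_cancel_left]
        omega
      rcases CoxKR.Z_right cs hZr hxle with hA | ⟨hlx, hA⟩
      · rw [hcanc] at hA
        have := (CoxKR.bruhat_prepend cs hpre hA).1
        rw [cs.simple_mul_simple_cancel_left] at this
        exact ⟨x, hxmin, this⟩
      · rw [hcanc] at hA
        have hres := (CoxKR.bruhat_prepend cs hpre hA).2
        rw [cs.simple_mul_simple_cancel_left] at hres
        refine ⟨cs.simple i * x * cs.simple j, hmk _ (hσconj x hxmin.1) ?_, ?_⟩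
        · calc cs.length (cs.simple i * x * cs.simple j)
              = cs.length (cs.simple i * (x * cs.simple j)) := by rw [mul_assoc]
          _ ≤ cs.length (x * cs.simple j) + 1 := hsimple_mul_bound _ i
          _ ≤ cs.length x := by omega
        · rw [mul_assoc]
          exact hres
    · -- C1b : ℓ w' = ℓ w - 2
      have hcanc : w' * cs.simple j = cs.simple i * w := by
        rw [hstep, cs.simple_mul_simple_cancel_right]
      have happ : cs.length (w' * cs.simple j) = cs.length w' + 1 := by
        rw [hcanc, hstep]
        omega
      have h1 := (CoxKR.bruhat_append cs happ hxle).1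
      rw [hcanc] at h1
      have hpre : cs.length (cs.simple i * (cs.simple i * w)) = cs.length (cs.simple i * w) + 1 := by
        rw [cs.simple_mul_simple_cancel_left]
        omega
      have h2 := (CoxKR.bruhat_prepend cs hpre h1).1
      rw [cs.simple_mul_simple_cancel_left] at h2
      exact ⟨x, hxmin, h2⟩
end

section
/- Let (W,S) be a Coxeter system with automorphism σ fixing S setwise, and let O be a σ-conjugacy class such that every element w of O satisfies: w is of minimal length in O if and only if w is minimal in O with respect to the Bruhat order. Deduce this equivalence assuming Proposition: for w →_σ w' a single step and O ⪯_σ w' one has O ⪯_σ w, and assuming every element of O can be brought to a minimal length element by →_σ. -/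
/-- One step of length-nonincreasing σ-twisted conjugation by a simple reflection. -/
def CoxeterSystem.sigmaStep {B W : Type*} [Group W] {M : CoxeterMatrix B}
    (cs : CoxeterSystem M W) (σ : W ≃* W) (w w' : W) : Prop :=
  ∃ i : B, w' = cs.simple i * w * σ (cs.simple i) ∧ cs.length w' ≤ cs.length w

/-- `O ⪯_σ w`: some minimal length element of the σ-conjugacy class of `o` is `≤ w`. -/
def preceq {B W : Type*} [Group W] {M : CoxeterMatrix B} (cs : CoxeterSystem M W)
    (σ : W ≃* W) (o w : W) : Prop :=
  ∃ x : W, minLenIn cs σ o x ∧ cs.bruhatLE x w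

/-- Corollary 2.8: assuming (i) every element of a σ-conjugacy class can be brought to a
minimal length element by `→_σ`, and (ii) the one-step monotonicity of `⪯_σ`,
an element `v` of the class `O` of `o` has minimal length in `O` if and only if `v` is a
minimal element of `O` with respect to the Bruhat order. -/
theorem min_length_iff_bruhat_minimal {B W : Type*} [Group W] {M : CoxeterMatrix B}
    (cs : CoxeterSystem M W) (σ : W ≃* W)
    (hσ : ∀ i : B, ∃ j : B, σ (cs.simple i) = cs.simple j)
    (hred : ∀ o w : W, sigmaConj σ w o →
      ∃ w' : W, minLenIn cs σ o w' ∧ Relation.ReflTransGen (cs.sigmaStep σ) w w')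
    (hmono : ∀ o' w w' : W, cs.sigmaStep σ w w' → preceq cs σ o' w' → preceq cs σ o' w)
    (o v : W) (hv : sigmaConj σ v o) :
    (∀ y : W, sigmaConj σ y o → cs.length v ≤ cs.length y) ↔
      ¬ ∃ x : W, sigmaConj σ x o ∧ cs.bruhatLE x v ∧ x ≠ v := by
  constructor
  · rintro hmin ⟨x, hxO, ⟨ω, hωv, hωred, ω', hsub, hω'x⟩, hne⟩
    have h1 : cs.length x ≤ ω'.length := hω'x ▸ cs.length_wordProd_le ω'
    have h2 : ω'.length ≤ ω.length := hsub.length_le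
    have h3 : cs.length v ≤ cs.length x := hmin x hxO
    have h4 : cs.length v = ω.length := hωv ▸ hωred
    have hlen : ω'.length = ω.length := le_antisymm h2 (by omega)
    exact hne (by rw [← hω'x, hsub.eq_of_length hlen, hωv])
  · intro hBmin
    obtain ⟨w', hw'min, hsteps⟩ := hred o v hv
    have hpre : preceq cs σ o v := by
      refine Relation.ReflTransGen.head_induction_on hsteps ?_ ?_
      · obtain ⟨ω, hωlen, hωv⟩ := cs.exists_reduced_word w'
        exact ⟨w', hw'min, ω, hωv.symm, hωlen, ω, List.Sublist.refl ω, hωv.symm⟩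
      · intro a c hac _ hc
        exact hmono o a c hac hc
    obtain ⟨x, hxmin, hxv⟩ := hpre
    have hx : x = v := by
      by_contra hne
      exact hBmin ⟨x, hxmin.1, hxv, hne⟩
    exact hx ▸ hxmin.2
end

section
/- Let (W,S) be a Coxeter system with automorphism σ preserving S, and O a σ-conjugacy class satisfying the reduction property (every element of O is connected by →_σ to a minimal length element). Then for w ∈ W: there exists a minimal length element x of O with x ≤ w if and only if there exists any element x ∈ O with x ≤ w. -/
namespace CorAux
open CoxeterSystem List
open scoped Classical

variable {B W : Type*} [Group W] {M : CoxeterMatrix B} (cs : CoxeterSystem M W)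

local prefix:100 "s" => cs.simple
local prefix:100 "π" => cs.wordProd
local prefix:100 "ℓ" => cs.length
local prefix:100 "ris" => cs.rightInvSeq

/-- One generator of the reflection cocycle permutation action on `W × ZMod 2`. -/
noncomputable def pf (i : B) : W × ZMod 2 → W × ZMod 2 :=
  fun x => (s i * x.1 * s i, x.2 + if x.1 = s i then 1 else 0)

lemma pf_invol (i : B) : ∀ x, pf cs i (pf cs i x) = x := by
  rintro ⟨t, e⟩
  have h1 : s i * (s i * t * s i) * s i = t := by
    have := cs.simple_mul_simple_self i
    calc s i * (s i * t * s i) * s i = (s i * s i) * t * (s i * s i) := by group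
    _ = t := by rw [this]; group
  have h2 : (s i * t * s i = s i) ↔ (t = s i) := by
    constructor
    · intro h
      have := congrArg (fun z => s i * z * s i) h
      simpa [h1, cs.simple_mul_simple_cancel_left] using this
    · rintro rfl; rw [cs.simple_mul_simple_self, one_mul]
  simp only [pf, h1, h2]
  refine Prod.ext rfl ?_
  by_cases h : t = s i <;> simp [h]
  · show e + 1 + 1 = e
    have : (1 + 1 : ZMod 2) = 0 := by decide
    rw [add_assoc, this, add_zero]

/-- The cocycle generator as a permutation. -/
noncomputable def pe (i : B) : Equiv.Perm (W × ZMod 2) :=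
  ⟨pf cs i, pf cs i, fun x => pf_invol cs i x, fun x => pf_invol cs i x⟩

lemma pe_apply (i : B) (t : W) (e : ZMod 2) :
    pe cs i (t, e) = (s i * t * s i, e + if t = s i then 1 else 0) := rfl


lemma conj_q (i j : B) (n : ℤ) :
    s j * (s i * s j) ^ n * s j = (s i * s j) ^ (-n) := by
  have h : (MulAut.conj (s j)) ((s i * s j) ^ n) = ((MulAut.conj (s j)) (s i * s j)) ^ n :=
    map_zpow _ _ _
  have hq : (MulAut.conj (s j)) (s i * s j) = (s i * s j)⁻¹ := by
    rw [MulAut.conj_apply, mul_inv_rev, cs.inv_simple, cs.inv_simple]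
    rw [← mul_assoc, mul_assoc (s j * s i), cs.simple_mul_simple_self, mul_one]
  rw [hq, inv_zpow, ← zpow_neg] at h
  rw [MulAut.conj_apply, cs.inv_simple] at h
  exact h

lemma b_mul_q (i j : B) (n : ℤ) :
    s j * (s i * s j) ^ n = (s i * s j) ^ (-n) * s j := by
  have := conj_q cs i j n
  calc s j * (s i * s j) ^ n = (s j * (s i * s j) ^ n * s j) * s j := by
        rw [mul_assoc, mul_assoc, cs.simple_mul_simple_self, mul_one]
  _ = (s i * s j) ^ (-n) * s j := by rw [this]

lemma simple_conj_iff (j : B) (X Y : W) :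
    (s j * X * s j = Y) ↔ (X = s j * Y * s j) := by
  have hb : s j * s j = 1 := cs.simple_mul_simple_self j
  constructor
  · intro h
    rw [← h]
    calc X = (s j * s j) * X * (s j * s j) := by rw [hb]; group
    _ = s j * (s j * X * s j) * s j := by group
  · intro h
    rw [h]
    calc s j * (s j * Y * s j) * s j = (s j * s j) * Y * (s j * s j) := by group
    _ = Y := by rw [hb]; group

lemma pow_pe (i j : B) (k : ℕ) (t : W) (e : ZMod 2) :
    ((pe cs i * pe cs j) ^ k) (t, e) =
      ((s i * s j) ^ (k : ℤ) * t * (s i * s j) ^ (-(k : ℤ)),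
        e + ∑ r ∈ Finset.range (2 * k),
          if t = (s i * s j) ^ (-(r : ℤ)) * s j then 1 else 0) := by
  induction k with
  | zero => simp
  | succ k ih =>
    set q := s i * s j with hq
    have hmove : ∀ n : ℤ, s j * q ^ n = q ^ (-n) * s j := fun n => b_mul_q cs i j n
    rw [pow_succ', Equiv.Perm.mul_apply, ih]
    set T := q ^ (k : ℤ) * t * q ^ (-(k : ℤ)) with hT
    set E := e + ∑ r ∈ Finset.range (2 * k),
        (if t = q ^ (-(r : ℤ)) * s j then (1 : ZMod 2) else 0) with hE
    have happ : (pe cs i * pe cs j) (T, E) =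
        (s i * (s j * T * s j) * s i,
          E + (if T = s j then 1 else 0) + (if s j * T * s j = s i then 1 else 0)) := by
      rw [Equiv.Perm.mul_apply, pe_apply, pe_apply]
    rw [happ]
    have hshift : ∀ X : W, (T = X) ↔ (t = q ^ (-(k:ℤ)) * X * q ^ (k:ℤ)) := by
      intro X
      rw [hT]
      constructor
      · intro h
        rw [← h]
        rw [← mul_assoc, ← mul_assoc, ← zpow_add, neg_add_cancel, zpow_zero, one_mul,
          mul_assoc, ← zpow_add, neg_add_cancel, zpow_zero, mul_one]
      · intro h
        rw [h]
        rw [← mul_assoc, ← mul_assoc, ← zpow_add, add_neg_cancel, zpow_zero, one_mul,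
          mul_assoc, ← zpow_add, add_neg_cancel, zpow_zero, mul_one]
    have hbab : s j * s i * s j = q ^ (-1 : ℤ) * s j := by
      rw [zpow_neg_one, hq, mul_inv_rev, cs.inv_simple, cs.inv_simple, mul_assoc]
    have hc1 : (T = s j) ↔ (t = q ^ (-((2*k : ℕ) : ℤ)) * s j) := by
      rw [hshift (s j), mul_assoc, hmove (k:ℤ), ← mul_assoc, ← zpow_add]
      have : (-(k:ℤ) + -(k:ℤ)) = -((2*k : ℕ) : ℤ) := by push_cast; ring
      rw [this]
    have hc2 : (s j * T * s j = s i) ↔ (t = q ^ (-((2*k+1 : ℕ) : ℤ)) * s j) := by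
      rw [simple_conj_iff cs j T (s i)]
      rw [hshift (s j * s i * s j), hbab]
      rw [← mul_assoc, ← zpow_add, mul_assoc, hmove (k:ℤ), ← mul_assoc, ← zpow_add]
      have : (-(k:ℤ) + -1 + -(k:ℤ)) = -((2*k+1 : ℕ) : ℤ) := by push_cast; ring
      rw [this]
    refine Prod.ext ?_ ?_
    · show s i * (s j * T * s j) * s i = q ^ ((k:ℤ)+1) * t * q ^ (-((k:ℤ)+1))
      have h1 : s i * (s j * T * s j) * s i = q * T * q⁻¹ := by
        rw [hq, mul_inv_rev, cs.inv_simple, cs.inv_simple]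
        group
      rw [h1, hT, ← zpow_neg_one q]
      rw [show q * (q ^ (k : ℤ) * t * q ^ (-(k : ℤ))) * q ^ (-1:ℤ)
            = (q * q ^ (k:ℤ)) * t * (q ^ (-(k:ℤ)) * q ^ (-1:ℤ)) by group]
      rw [← zpow_one_add, ← zpow_add,
        show (1 + (k:ℤ)) = (k:ℤ)+1 by omega,
        show (-(k:ℤ) + -1) = -((k:ℤ)+1) by omega]
    · show E + (if T = s j then 1 else 0) + (if s j * T * s j = s i then 1 else 0)
        = e + ∑ r ∈ Finset.range (2 * (k+1)), (if t = q ^ (-(r : ℤ)) * s j then (1:ZMod 2) else 0)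
      rw [show 2 * (k+1) = (2*k + 1) + 1 by omega]
      rw [Finset.sum_range_succ, Finset.sum_range_succ]
      rw [if_congr hc1 rfl rfl, if_congr hc2 rfl rfl, hE]
      ring

lemma pe_liftable : CoxeterMatrix.IsLiftable M (pe cs) := by
  intro i j
  set m := M i j with hm
  have hq1 : (s i * s j) ^ ((m:ℕ):ℤ) = 1 := by
    rw [zpow_natCast, hm, cs.simple_mul_simple_pow]
  apply Equiv.ext
  rintro ⟨t, e⟩
  rw [pow_pe]
  have h1 : (s i * s j) ^ ((m:ℕ):ℤ) * t * (s i * s j) ^ (-((m:ℕ):ℤ)) = t := by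
    rw [zpow_neg, hq1, one_mul, inv_one, mul_one]
  have h2 : ∀ r : ℕ, ((s i * s j) ^ (-((m + r:ℕ):ℤ)) * s j : W)
      = (s i * s j) ^ (-((r:ℕ):ℤ)) * s j := by
    intro r
    rw [show (-((m + r:ℕ):ℤ)) = -((m:ℕ):ℤ) + -((r:ℕ):ℤ) by push_cast; ring, zpow_add,
      zpow_neg, hq1, inv_one, one_mul]
  have h3 : ∑ r ∈ Finset.range (2 * m),
      (if t = (s i * s j) ^ (-(r : ℤ)) * s j then (1:ZMod 2) else 0) = 0 := by
    rw [show 2 * m = m + m by omega, Finset.sum_range_add]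
    have : ∀ r ∈ Finset.range m,
        (if t = (s i * s j) ^ (-((m + r:ℕ) : ℤ)) * s j then (1:ZMod 2) else 0)
        = (if t = (s i * s j) ^ (-(r : ℤ)) * s j then (1:ZMod 2) else 0) := by
      intro r _
      rw [if_congr (by rw [h2 r]) rfl rfl]
    rw [Finset.sum_congr rfl this]
    have hx : ∀ x : ZMod 2, x + x = 0 := by decide
    exact hx _
  rw [h1, h3, add_zero]
  rfl

/-- The reflection cocycle homomorphism. -/
noncomputable def phi : W →* Equiv.Perm (W × ZMod 2) :=
  CoxeterSystem.lift cs ⟨pe cs, pe_liftable cs⟩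

lemma phi_simple (i : B) : phi cs (s i) = pe cs i :=
  cs.lift_apply_simple (pe_liftable cs) i

/-- The cocycle value. -/
noncomputable def eta (w t : W) : ZMod 2 := (phi cs w (t, 0)).2

lemma phi_wordProd (ω : List B) (t : W) (e : ZMod 2) :
    phi cs (π ω) (t, e) = (π ω * t * (π ω)⁻¹,
      e + (((ris ω).count t : ℕ) : ZMod 2)) := by
  induction ω generalizing t e with
  | nil => simp [wordProd_nil]
  | cons i ω ih =>
    rw [cs.wordProd_cons, map_mul, Equiv.Perm.mul_apply, ih, phi_simple, pe_apply]
    have hris : ris (i :: ω) = ((π ω)⁻¹ * s i * (π ω)) :: ris ω := rfl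
    refine Prod.ext ?_ ?_
    · show s i * (π ω * t * (π ω)⁻¹) * s i = (s i * π ω) * t * (s i * π ω)⁻¹
      rw [mul_inv_rev, cs.inv_simple]
      group
    · show e + (((ris ω).count t : ℕ) : ZMod 2)
          + (if π ω * t * (π ω)⁻¹ = s i then 1 else 0)
        = e + ((((ris (i :: ω)).count t : ℕ)) : ZMod 2)
      rw [hris, List.count_cons]
      have hcond : (π ω * t * (π ω)⁻¹ = s i) ↔ (t = (π ω)⁻¹ * s i * (π ω)) := by
        constructor
        · intro h
          rw [← h]; group
        · intro h
          rw [h]; group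
      by_cases h : t = (π ω)⁻¹ * s i * (π ω)
      · rw [if_pos (hcond.mpr h), if_pos (by exact beq_iff_eq.mpr h.symm)]
        push_cast
        ring
      · rw [if_neg (fun hc => h (hcond.mp hc)), if_neg (by simpa using fun hc => h hc.symm)]
        push_cast
        ring

lemma phi_apply (w t : W) (e : ZMod 2) :
    phi cs w (t, e) = (w * t * w⁻¹, e + eta cs w t) := by
  obtain ⟨ω, _, hω⟩ := cs.exists_reduced_word' w
  subst hω
  rw [phi_wordProd, eta, phi_wordProd, zero_add]

lemma eta_wordProd (ω : List B) (t : W) :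
    eta cs (π ω) t = (((ris ω).count t : ℕ) : ZMod 2) := by
  rw [eta, phi_wordProd, zero_add]


lemma eta_inv_eq (v x : W) : eta cs v⁻¹ (v * x * v⁻¹) = eta cs v x := by
  set a := eta cs v x with ha
  have h1 : phi cs v (x, 0) = (v * x * v⁻¹, a) := by rw [phi_apply, zero_add]
  have hinv : phi cs v⁻¹ (v * x * v⁻¹, a) = (x, 0) := by
    calc phi cs v⁻¹ (v * x * v⁻¹, a) = phi cs v⁻¹ (phi cs v (x, 0)) := by rw [h1]
    _ = (phi cs (v⁻¹ * v)) (x, 0) := by rw [map_mul]; rfl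
    _ = (x, 0) := by rw [inv_mul_cancel, map_one]; rfl
  have h2 : phi cs v⁻¹ (v * x * v⁻¹, a)
      = (v⁻¹ * (v * x * v⁻¹) * v⁻¹⁻¹, a + eta cs v⁻¹ (v * x * v⁻¹)) := phi_apply ..
  have h3 : a + eta cs v⁻¹ (v * x * v⁻¹) = 0 := by
    have := congrArg Prod.snd (h2.symm.trans hinv)
    simpa using this
  have : ∀ x y : ZMod 2, x + y = 0 → y = x := by decide
  exact this _ _ h3

lemma eta_refl_self {t : W} (ht : cs.IsReflection t) : eta cs t t = 1 := by
  obtain ⟨v, i, rfl⟩ := ht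
  set a := eta cs v (s i) with ha
  have hc : eta cs v⁻¹ (v * s i * v⁻¹) = a := eta_inv_eq cs v (s i)
  have hstep1 : phi cs v⁻¹ (v * s i * v⁻¹, 0) = (s i, a) := by
    rw [phi_apply, hc]
    congr 1
    · group
    · rw [zero_add]
  have hstep2 : (pe cs i) ((s i : W), (a : ZMod 2)) = (s i, a + 1) := by
    rw [pe_apply, if_pos rfl]
    congr 1
    rw [cs.simple_mul_simple_self, one_mul]
  have hstep3 : phi cs v (s i, a + 1) = (v * s i * v⁻¹, a + 1 + a) := phi_apply ..
  have : phi cs (v * s i * v⁻¹) (v * s i * v⁻¹, 0) = (v * s i * v⁻¹, a + 1 + a) := by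
    rw [map_mul, map_mul]
    rw [Equiv.Perm.mul_apply, Equiv.Perm.mul_apply]
    rw [hstep1, phi_simple, hstep2, hstep3]
  rw [eta, this]
  show a + 1 + a = 1
  have hz : ∀ x : ZMod 2, x + 1 + x = 1 := by decide
  exact hz a

lemma eta_mul_refl (w : W) {t : W} (ht : cs.IsReflection t) :
    eta cs (w * t) t = eta cs w t + 1 := by
  have h1 : phi cs t (t, 0) = (t, 1) := by
    rw [phi_apply, zero_add, eta_refl_self cs ht]
    congr 1
    group
  have h2 : phi cs (w * t) (t, 0) = (w * t * w⁻¹, 1 + eta cs w t) := by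
    rw [map_mul, Equiv.Perm.mul_apply, h1, phi_apply]
  rw [eta, h2]
  show 1 + eta cs w t = eta cs w t + 1
  ring

lemma eta_eq_one_of_lt {w t : W} (ht : cs.IsReflection t)
    (h : ℓ (w * t) < ℓ w) : eta cs w t = 1 := by
  by_contra hne
  have h0 : eta cs w t = 0 := by
    have : ∀ x : ZMod 2, x = 0 ∨ x = 1 := by decide
    rcases this (eta cs w t) with h' | h'
    · exact h'
    · exact absurd h' hne
  have h1 : eta cs (w * t) t = 1 := by rw [eta_mul_refl cs _ ht, h0, zero_add]
  -- then ℓ ((w*t)*t) < ℓ (w*t), i.e. ℓ w < ℓ (w*t), contradiction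
  obtain ⟨ω, hred, hω⟩ := cs.exists_reduced_word' (w * t)
  rw [hω] at h1
  rw [eta_wordProd] at h1
  have hcount : (ris ω).count t ≠ 0 := by
    intro hc
    rw [hc] at h1
    simp at h1
  have hmem : t ∈ ris ω := by
    by_contra hm
    exact hcount (List.count_eq_zero.mpr hm)
  obtain ⟨n, hn, he⟩ := List.getElem_of_mem hmem
  have hn' : n < ω.length := by
    rw [cs.length_rightInvSeq] at hn
    exact hn
  have hgetD : (ris ω).getD n 1 = t := by
    rw [List.getD_eq_getElem _ _ hn, he]
  have herase : π ω * t = π (ω.eraseIdx n) := by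
    rw [← hgetD]
    exact cs.wordProd_mul_getD_rightInvSeq ω n
  have hlen : ℓ (π ω * t) < ℓ (π ω) := by
    rw [herase]
    calc ℓ (π (ω.eraseIdx n)) ≤ (ω.eraseIdx n).length := cs.length_wordProd_le _
    _ < ω.length := by
        have := List.length_eraseIdx_add_one hn'
        omega
    _ = ℓ (π ω) := hred.symm
  rw [← hω] at hlen
  rw [(by group : w * t * t = w * (t * t)), ht.mul_self, mul_one] at hlen
  omega

lemma lt_iff_eta_eq_one {w t : W} (ht : cs.IsReflection t) :
    ℓ (w * t) < ℓ w ↔ eta cs w t = 1 := by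
  constructor
  · exact eta_eq_one_of_lt cs ht
  · intro h1
    obtain ⟨ω, hred, hω⟩ := cs.exists_reduced_word' w
    rw [hω, eta_wordProd] at h1
    have hcount : (ris ω).count t ≠ 0 := by
      intro hc
      rw [hc] at h1
      simp at h1
    have hmem : t ∈ ris ω := by
      by_contra hm
      exact hcount (List.count_eq_zero.mpr hm)
    obtain ⟨n, hn, he⟩ := List.getElem_of_mem hmem
    have hn' : n < ω.length := by rw [cs.length_rightInvSeq] at hn; exact hn
    have hgetD : (ris ω).getD n 1 = t := by rw [List.getD_eq_getElem _ _ hn, he]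
    have herase : π ω * t = π (ω.eraseIdx n) := by
      rw [← hgetD]
      exact cs.wordProd_mul_getD_rightInvSeq ω n
    rw [hω]
    rw [herase]
    calc ℓ (π (ω.eraseIdx n)) ≤ (ω.eraseIdx n).length := cs.length_wordProd_le _
    _ < ω.length := by
        have := List.length_eraseIdx_add_one hn'
        omega
    _ = ℓ (π ω) := hred.symm

/-- Strong exchange property: valid for an arbitrary word. -/
lemma strong_exchange (ω : List B) {t : W} (ht : cs.IsReflection t)
    (hlt : ℓ (π ω * t) < ℓ (π ω)) :
    ∃ j, j < ω.length ∧ π (ω.eraseIdx j) = π ω * t := by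
  have h1 : eta cs (π ω) t = 1 := eta_eq_one_of_lt cs ht hlt
  rw [eta_wordProd] at h1
  have hcount : (ris ω).count t ≠ 0 := by
    intro hc
    rw [hc] at h1
    simp at h1
  have hmem : t ∈ ris ω := by
    by_contra hm
    exact hcount (List.count_eq_zero.mpr hm)
  obtain ⟨n, hn, he⟩ := List.getElem_of_mem hmem
  have hn' : n < ω.length := by rw [cs.length_rightInvSeq] at hn; exact hn
  have hgetD : (ris ω).getD n 1 = t := by rw [List.getD_eq_getElem _ _ hn, he]
  exact ⟨n, hn', by rw [← hgetD]; exact (cs.wordProd_mul_getD_rightInvSeq ω n).symm⟩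


lemma isReduced_nil' : cs.IsReduced ([] : List B) := by
  unfold CoxeterSystem.IsReduced
  rw [cs.wordProd_nil]
  simp

lemma exists_reduced_sublist' : ∀ (n : ℕ) (ω : List B), ω.length ≤ n →
    ∃ ω', ω'.Sublist ω ∧ π ω' = π ω ∧ cs.IsReduced ω' := by
  intro n
  induction n with
  | zero =>
    intro ω h
    have : ω = [] := List.eq_nil_of_length_eq_zero (Nat.le_zero.mp h)
    subst this
    exact ⟨[], List.Sublist.refl _, rfl, isReduced_nil' cs⟩
  | succ n ih =>
    intro ω hlen
    by_cases hred : cs.IsReduced ω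
    · exact ⟨ω, List.Sublist.refl _, rfl, hred⟩
    · have hex : ∃ k, ¬ cs.IsReduced (ω.take k) := ⟨ω.length, by rwa [List.take_length]⟩
      set k := Nat.find hex with hkdef
      have hkspec : ¬ cs.IsReduced (ω.take k) := Nat.find_spec hex
      have hkle : k ≤ ω.length := Nat.find_min' hex (by rwa [List.take_length])
      have hk1 : 1 ≤ k := by
        rcases Nat.eq_zero_or_pos k with h0 | h1
        · exfalso; apply hkspec; rw [h0, List.take_zero]; exact isReduced_nil' cs
        · exact h1
      have hρred : cs.IsReduced (ω.take (k-1)) := by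
        have := Nat.find_min hex (show k - 1 < k by omega)
        exact not_not.mp this
      clear_value k
      clear hkdef
      obtain ⟨k', rfl⟩ : ∃ k', k = k' + 1 := ⟨k - 1, by omega⟩
      simp only [Nat.add_sub_cancel] at hρred
      have hk1' : k' < ω.length := by omega
      have htake : ω.take (k'+1) = ω.take k' ++ [ω[k']] := by
        rw [List.take_succ, List.getElem?_eq_getElem hk1']
        rfl
      have hρlen : (ω.take k').length = k' := by
        rw [List.length_take]
        omega
      have hρl : ℓ (π (ω.take k')) = k' := by
        have h := hρred
        unfold CoxeterSystem.IsReduced at h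
        rw [hρlen] at h
        exact h
      have hπtake : π (ω.take (k'+1)) = π (ω.take k') * s (ω[k']) := by
        rw [htake, ← List.concat_eq_append, cs.wordProd_concat]
      have hne : ℓ (π (ω.take k') * s (ω[k'])) ≠ ℓ (π (ω.take k')) :=
        cs.length_mul_simple_ne _ _
      have hdisj := cs.length_mul_simple (π (ω.take k')) (ω[k'])
      have hnotred : ℓ (π (ω.take k') * s (ω[k'])) ≠ k' + 1 := by
        intro hval
        apply hkspec
        unfold CoxeterSystem.IsReduced
        rw [hπtake, hval, List.length_take]
        omega
      have hlt : ℓ (π (ω.take k') * s (ω[k'])) < ℓ (π (ω.take k')) := by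
        rcases hdisj with h | h
        · exfalso; apply hnotred; rw [h, hρl]
        · rw [hρl] at h ⊢
          omega
      obtain ⟨j, hj, hje⟩ := strong_exchange cs (ω.take k') (cs.isReflection_simple (ω[k'])) hlt
      have hπω'' : π ((ω.take k').eraseIdx j ++ ω.drop (k'+1)) = π ω := by
        rw [cs.wordProd_append, hje, ← hπtake, ← cs.wordProd_append,
          List.take_append_drop]
      have hsub : ((ω.take k').eraseIdx j ++ ω.drop (k'+1)).Sublist ω := by
        have h1 : ((ω.take k').eraseIdx j).Sublist (ω.take k') := List.eraseIdx_sublist _ j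
        have h2 : (ω.drop (k'+1)).Sublist (ω[k'] :: ω.drop (k'+1)) := List.sublist_cons_self _ _
        have h3 : ω = ω.take k' ++ (ω[k'] :: ω.drop (k'+1)) := by
          conv_lhs => rw [← List.take_append_drop (k'+1) ω]
          rw [htake]
          simp
        have h4 := List.Sublist.append h1 h2
        rwa [← h3] at h4
      have hlen'' : ((ω.take k').eraseIdx j ++ ω.drop (k'+1)).length ≤ n := by
        rw [List.length_append, List.length_drop]
        have hje' := List.length_eraseIdx_add_one hj
        rw [hρlen] at hje'
        have hk2 : 1 ≤ k' := by
          rw [hρlen] at hj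
          omega
        omega
      obtain ⟨ω₂, hsub₂, hπ₂, hred₂⟩ := ih _ hlen''
      exact ⟨ω₂, hsub₂.trans hsub, hπ₂.trans hπω'', hred₂⟩

lemma exists_reduced_sublist (ω : List B) :
    ∃ ω', ω'.Sublist ω ∧ π ω' = π ω ∧ cs.IsReduced ω' :=
  exists_reduced_sublist' cs ω.length ω le_rfl


/-- One increasing step: right multiplication by a reflection increasing length. -/
def cstep (x y : W) : Prop := ∃ t, cs.IsReflection t ∧ y = x * t ∧ ℓ x < ℓ y

/-- Bruhat order via increasing reflection chains. -/
def cLE : W → W → Prop := Relation.ReflTransGen (cstep cs)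

lemma cLE_refl (x : W) : cLE cs x x := Relation.ReflTransGen.refl

lemma cLE_trans {x y z : W} (h1 : cLE cs x y) (h2 : cLE cs y z) : cLE cs x z :=
  Relation.ReflTransGen.trans h1 h2

lemma cLE_length {x y : W} (h : cLE cs x y) : ℓ x ≤ ℓ y := by
  induction h with
  | refl => exact le_rfl
  | tail _ hstep ih =>
    obtain ⟨t, _, rfl, hlt⟩ := hstep
    omega

lemma cLE_mul_right {x t : W} (ht : cs.IsReflection t) (h : ℓ x < ℓ (x * t)) :
    cLE cs x (x * t) :=
  Relation.ReflTransGen.single ⟨t, ht, rfl, h⟩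

lemma cLE_mul_left {x t : W} (ht : cs.IsReflection t) (h : ℓ x < ℓ (t * x)) :
    cLE cs x (t * x) := by
  have hconj : cs.IsReflection (x⁻¹ * t * x) := by
    have := ht.conj x⁻¹
    rwa [inv_inv] at this
  have heq : t * x = x * (x⁻¹ * t * x) := by group
  rw [heq]
  exact Relation.ReflTransGen.single ⟨x⁻¹ * t * x, hconj, rfl, by rw [← heq]; exact h⟩

lemma cLE_inv {x y : W} (h : cLE cs x y) : cLE cs x⁻¹ y⁻¹ := by
  induction h with
  | refl => exact Relation.ReflTransGen.refl
  | @tail b c hxb hstep ih =>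
    obtain ⟨t, ht, rfl, hlt⟩ := hstep
    have hconj : cs.IsReflection (b * t * b⁻¹) := ht.conj b
    have heq : (b * t)⁻¹ = b⁻¹ * (b * t * b⁻¹) := by
      rw [mul_inv_rev, ht.inv]
      group
    refine Relation.ReflTransGen.tail ih ⟨b * t * b⁻¹, hconj, heq, ?_⟩
    rw [cs.length_inv, cs.length_inv]
    exact hlt

/-- Key cancellation lemma (a reflection-strengthened exchange consequence). -/
lemma L1 (i : B) {v t : W} (ht : cs.IsReflection t)
    (h1 : ℓ (s i * v) = ℓ v + 1) (h2 : ℓ v < ℓ (v * t))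
    (h3 : ℓ (s i * v * t) < ℓ (s i * v)) : s i * v * t = v := by
  obtain ⟨ωv, hred, hv⟩ := cs.exists_reduced_word' v
  have hπ : π (i :: ωv) = s i * v := by rw [cs.wordProd_cons, ← hv]
  have hlt : ℓ (π (i :: ωv) * t) < ℓ (π (i :: ωv)) := by rw [hπ]; exact h3
  obtain ⟨j, hj, hje⟩ := strong_exchange cs (i :: ωv) ht hlt
  rw [hπ] at hje
  match j, hj with
  | 0, _ =>
    rw [List.eraseIdx_cons_zero] at hje
    rw [← hv] at hje
    exact hje.symm
  | (j' + 1), hj => 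
    rw [List.eraseIdx_cons_succ] at hje
    rw [cs.wordProd_cons] at hje
    have hj' : j' < ωv.length := by simpa using hj
    have hcancel : π (ωv.eraseIdx j') = v * t := by
      have : s i * (v * t) = s i * π (ωv.eraseIdx j') := by rw [← mul_assoc]; exact hje.symm
      exact (mul_left_cancel this).symm
    have : ℓ (v * t) ≤ (ωv.eraseIdx j').length := by
      rw [← hcancel]; exact cs.length_wordProd_le _
    have hlen := List.length_eraseIdx_add_one hj'
    have hωvlen : ωv.length = ℓ v := by rw [hv]; exact hred.symm
    omega


lemma cJ : ∀ (n : ℕ) (w : W), ℓ w ≤ n → ∀ (i : B) (u : W), cLE cs u w →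
    ((ℓ w < ℓ (s i * w) → ℓ u < ℓ (s i * u) → cLE cs (s i * u) (s i * w)) ∧
     (ℓ (s i * w) < ℓ w → ℓ u < ℓ (s i * u) → cLE cs u (s i * w)) ∧
     (ℓ (s i * w) < ℓ w → ℓ (s i * u) < ℓ u → cLE cs (s i * u) (s i * w))) := by
  intro n
  induction n with
  | zero =>
    intro w hw i u hu
    have hw0 : ℓ w = 0 := by omega
    have hu0 : ℓ u = 0 := by
      have := cLE_length cs hu
      omega
    have hweq : w = 1 := cs.length_eq_zero_iff.mp hw0
    have hueq : u = 1 := cs.length_eq_zero_iff.mp hu0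
    subst hweq hueq
    exact ⟨fun _ _ => cLE_refl cs _, fun h _ => by omega, fun h _ => by omega⟩
  | succ n ih =>
    intro w hw i u hu
    rcases Relation.ReflTransGen.cases_tail hu with heq | ⟨v, huv, hstep⟩
    · -- u = w
      subst heq
      refine ⟨fun _ _ => cLE_refl cs _, fun h1 h2 => by omega, fun _ _ => cLE_refl cs _⟩
    · obtain ⟨t, ht, rfl, hlvw⟩ := hstep
      -- now w is v * t
      have hvn : ℓ v ≤ n := by omega
      obtain ⟨ihv2, ihv3, ihv4⟩ := ih v hvn i u huv
      have hvw : cLE cs v (v * t) := cLE_mul_right cs ht hlvw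
      have hsv := cs.length_simple_mul v i
      have hsw := cs.length_simple_mul (v * t) i
      have hassoc : s i * (v * t) = (s i * v) * t := by rw [mul_assoc]
      refine ⟨?_, ?_, ?_⟩
      · -- P2 : ascent on w, ascent on u
        intro hw_up hu_up
        rcases hsv with hsv_up | hsv_dn
        · have c1 : cLE cs (s i * u) (s i * v) := ihv2 (by omega) hu_up
          have hstep2 : cLE cs (s i * v) (s i * (v * t)) := by
            rw [hassoc]
            exact cLE_mul_right cs ht (by rw [← hassoc]; omega)
          exact cLE_trans cs c1 hstep2
        · -- descent on v
          have c1 : cLE cs u (s i * v) := ihv3 (by omega) hu_up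
          have hsvn : ℓ (s i * v) ≤ n := by omega
          have hcancel : s i * (s i * v) = v := cs.simple_mul_simple_cancel_left i
          have c2 : cLE cs (s i * u) v := by
            have := (ih (s i * v) hsvn i u c1).1
            rw [hcancel] at this
            exact this (by omega) hu_up
          have c3 : cLE cs (v * t) (s i * (v * t)) :=
            cLE_mul_left cs (cs.isReflection_simple i) (by omega)
          exact cLE_trans cs c2 (cLE_trans cs hvw c3)
      · -- P3 : descent on w, ascent on u
        intro hw_dn hu_up
        have hsw_val : ℓ (s i * (v * t)) + 1 = ℓ (v * t) := by omega
        rcases hsv with hsv_up | hsv_dn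
        · -- ascent on v
          by_cases hcmp : ℓ (s i * v) < ℓ (s i * (v * t))
          · have c1 : cLE cs v (s i * v) :=
              cLE_mul_left cs (cs.isReflection_simple i) (by omega)
            have c2 : cLE cs (s i * v) (s i * (v * t)) := by
              rw [hassoc]
              exact cLE_mul_right cs ht (by rw [← hassoc]; omega)
            exact cLE_trans cs huv (cLE_trans cs c1 c2)
          · -- L1 case : s i * (v*t) = v
            have hne : ℓ ((s i * v) * t) ≠ ℓ (s i * v) := ht.length_mul_left_ne (s i * v)
            have hl1 : s i * v * t = v := by
              apply L1 cs i ht hsv_up hlvw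
              rw [← hassoc]
              rw [← hassoc] at hne
              omega
            rw [hassoc, hl1]
            exact huv
        · -- descent on v
          have c1 : cLE cs u (s i * v) := ihv3 (by omega) hu_up
          have c2 : cLE cs (s i * v) (s i * (v * t)) := by
            rw [hassoc]
            exact cLE_mul_right cs ht (by rw [← hassoc]; omega)
          exact cLE_trans cs c1 c2
      · -- P4 : descent on w, descent on u
        intro hw_dn hu_dn
        have hsw_val : ℓ (s i * (v * t)) + 1 = ℓ (v * t) := by omega
        have hsu_u : cLE cs (s i * u) u := by
          have hcancel : s i * (s i * u) = u := cs.simple_mul_simple_cancel_left i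
          have := cLE_mul_left cs (cs.isReflection_simple i) (x := s i * u)
            (by rw [hcancel]; omega)
          rwa [hcancel] at this
        rcases hsv with hsv_up | hsv_dn
        · by_cases hcmp : ℓ (s i * v) < ℓ (s i * (v * t))
          · have c1 : cLE cs v (s i * v) :=
              cLE_mul_left cs (cs.isReflection_simple i) (by omega)
            have c2 : cLE cs (s i * v) (s i * (v * t)) := by
              rw [hassoc]
              exact cLE_mul_right cs ht (by rw [← hassoc]; omega)
            exact cLE_trans cs hsu_u (cLE_trans cs huv (cLE_trans cs c1 c2))
          · have hne : ℓ ((s i * v) * t) ≠ ℓ (s i * v) := ht.length_mul_left_ne (s i * v)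
            have hl1 : s i * v * t = v := by
              apply L1 cs i ht hsv_up hlvw
              rw [← hassoc]
              rw [← hassoc] at hne
              omega
            rw [hassoc, hl1]
            exact cLE_trans cs hsu_u huv
        · have c1 : cLE cs (s i * u) (s i * v) := ihv4 (by omega) hu_dn
          have c2 : cLE cs (s i * v) (s i * (v * t)) := by
            rw [hassoc]
            exact cLE_mul_right cs ht (by rw [← hassoc]; omega)
          exact cLE_trans cs c1 c2

/-- Left lifting, both ascents. -/
lemma cP2 {w u : W} (i : B) (h1 : ℓ w < ℓ (s i * w)) (h2 : ℓ u < ℓ (s i * u))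
    (h : cLE cs u w) : cLE cs (s i * u) (s i * w) :=
  ((cJ cs (ℓ w) w le_rfl i u h).1) h1 h2

/-- Left lifting: descent on w, ascent on u. -/
lemma cP3 {w u : W} (i : B) (h1 : ℓ (s i * w) < ℓ w) (h2 : ℓ u < ℓ (s i * u))
    (h : cLE cs u w) : cLE cs u (s i * w) :=
  ((cJ cs (ℓ w) w le_rfl i u h).2.1) h1 h2

/-- Left lifting: descents. -/
lemma cP4 {w u : W} (i : B) (h1 : ℓ (s i * w) < ℓ w) (h2 : ℓ (s i * u) < ℓ u)
    (h : cLE cs u w) : cLE cs (s i * u) (s i * w) :=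
  ((cJ cs (ℓ w) w le_rfl i u h).2.2) h1 h2

lemma inv_mul_simple (x : W) (i : B) : (x * s i)⁻¹ = s i * x⁻¹ := by
  rw [mul_inv_rev, cs.inv_simple]

/-- Right lifting, both ascents. -/
lemma cP2r {w u : W} (i : B) (h1 : ℓ w < ℓ (w * s i)) (h2 : ℓ u < ℓ (u * s i))
    (h : cLE cs u w) : cLE cs (u * s i) (w * s i) := by
  have h1' : ℓ w⁻¹ < ℓ (s i * w⁻¹) := by
    rw [← inv_mul_simple cs w i, cs.length_inv, cs.length_inv]
    exact h1
  have h2' : ℓ u⁻¹ < ℓ (s i * u⁻¹) := by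
    rw [← inv_mul_simple cs u i, cs.length_inv, cs.length_inv]
    exact h2
  have := cP2 cs i h1' h2' (cLE_inv cs h)
  rw [← inv_mul_simple cs w i, ← inv_mul_simple cs u i] at this
  have := cLE_inv cs this
  rwa [inv_inv, inv_inv] at this

/-- Right lifting: descent on w, ascent on u. -/
lemma cP3r {w u : W} (i : B) (h1 : ℓ (w * s i) < ℓ w) (h2 : ℓ u < ℓ (u * s i))
    (h : cLE cs u w) : cLE cs u (w * s i) := by
  have h1' : ℓ (s i * w⁻¹) < ℓ w⁻¹ := by
    rw [← inv_mul_simple cs w i, cs.length_inv, cs.length_inv]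
    exact h1
  have h2' : ℓ u⁻¹ < ℓ (s i * u⁻¹) := by
    rw [← inv_mul_simple cs u i, cs.length_inv, cs.length_inv]
    exact h2
  have := cP3 cs i h1' h2' (cLE_inv cs h)
  rw [← inv_mul_simple cs w i] at this
  have := cLE_inv cs this
  rwa [inv_inv, inv_inv] at this

/-- Right lifting: descents. -/
lemma cP4r {w u : W} (i : B) (h1 : ℓ (w * s i) < ℓ w) (h2 : ℓ (u * s i) < ℓ u)
    (h : cLE cs u w) : cLE cs (u * s i) (w * s i) := by
  have h1' : ℓ (s i * w⁻¹) < ℓ w⁻¹ := by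
    rw [← inv_mul_simple cs w i, cs.length_inv, cs.length_inv]
    exact h1
  have h2' : ℓ (s i * u⁻¹) < ℓ u⁻¹ := by
    rw [← inv_mul_simple cs u i, cs.length_inv, cs.length_inv]
    exact h2
  have := cP4 cs i h1' h2' (cLE_inv cs h)
  rw [← inv_mul_simple cs w i, ← inv_mul_simple cs u i] at this
  have := cLE_inv cs this
  rwa [inv_inv, inv_inv] at this


lemma cLE_subword {u w : W} (h : cLE cs u w) :
    ∀ ω : List B, cs.IsReduced ω → π ω = w → ∃ ω', ω'.Sublist ω ∧ π ω' = u := by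
  induction h with
  | refl => exact fun ω _ hω => ⟨ω, List.Sublist.refl _, hω⟩
  | @tail b c hub hstep ih =>
    intro ω hred hω
    obtain ⟨t, ht, rfl, hlt⟩ := hstep
    have hb : b * t * t = b := by rw [mul_assoc, ht.mul_self, mul_one]
    have hlt' : ℓ (π ω * t) < ℓ (π ω) := by
      rw [hω, mul_assoc, ht.mul_self, mul_one]
      exact hlt
    obtain ⟨j, hj, hje⟩ := strong_exchange cs ω ht hlt'
    have hjb : π (ω.eraseIdx j) = b := by
      rw [hje, hω, mul_assoc, ht.mul_self, mul_one]
    obtain ⟨ω₂, hsub₂, hπ₂, hred₂⟩ := exists_reduced_sublist cs (ω.eraseIdx j)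
    obtain ⟨ω₃, hsub₃, hπ₃⟩ := ih ω₂ hred₂ (hπ₂.trans hjb)
    exact ⟨ω₃, hsub₃.trans (hsub₂.trans (List.eraseIdx_sublist ω j)), hπ₃⟩

lemma isReduced_tail {j : B} {ρ : List B} (h : cs.IsReduced (j :: ρ)) :
    cs.IsReduced ρ := by
  have := CoxeterSystem.IsReduced.drop (j := 1) h
  simpa using this

lemma length_cons_reduced {j : B} {ρ : List B} (h : cs.IsReduced (j :: ρ)) :
    ℓ (π ρ) < ℓ (s j * π ρ) := by
  have h1 : ℓ (π (j :: ρ)) = ρ.length + 1 := by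
    rw [h]
    simp
  have h2 : ℓ (π ρ) = ρ.length := isReduced_tail cs h
  rw [cs.wordProd_cons] at h1
  omega

lemma cLE_of_reduced_sublist :
    ∀ (ω : List B), cs.IsReduced ω →
      ∀ (ω' : List B), cs.IsReduced ω' → ω'.Sublist ω → cLE cs (π ω') (π ω) := by
  intro ω
  induction ω with
  | nil =>
    intro _ ω' _ hsub
    rw [List.sublist_nil.mp hsub]
    exact cLE_refl cs _
  | cons j ρ ih =>
    intro hred ω' hred' hsub
    rcases List.sublist_cons_iff.mp hsub with hsub' | ⟨ρ', heq, hsub'⟩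
    · have c := ih (isReduced_tail cs hred) ω' hred' hsub'
      have cstep : cLE cs (π ρ) (π (j :: ρ)) := by
        rw [cs.wordProd_cons]
        exact cLE_mul_left cs (cs.isReflection_simple j) (length_cons_reduced cs hred)
      exact cLE_trans cs c cstep
    · subst heq
      have hredρ' : cs.IsReduced ρ' := isReduced_tail cs hred'
      have c := ih (isReduced_tail cs hred) ρ' hredρ' hsub'
      rw [cs.wordProd_cons, cs.wordProd_cons]
      exact cP2 cs j (length_cons_reduced cs hred) (length_cons_reduced cs hred') c


lemma bruhatLE_of_cLE {u w : W} (h : cLE cs u w) : cs.bruhatLE u w := by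
  obtain ⟨ω, hred, hω⟩ := cs.exists_reduced_word' w
  obtain ⟨ω', hsub, hπ⟩ := cLE_subword cs h ω hred hω.symm
  exact ⟨ω, hω.symm, hred, ω', hsub, hπ⟩

lemma cLE_of_bruhatLE {u w : W} (h : cs.bruhatLE u w) : cLE cs u w := by
  obtain ⟨ω, hω, hred, ω', hsub, hπ⟩ := h
  obtain ⟨ω₂, hsub₂, hπ₂, hred₂⟩ := exists_reduced_sublist cs ω'
  have := cLE_of_reduced_sublist cs ω hred ω₂ hred₂ (hsub₂.trans hsub)
  rwa [hπ₂.trans hπ, hω] at this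

/-- The key one-step pullback for Corollary 2.9. -/
lemma pullback_step (i j : B) {v y : W} (hw : ℓ v ≤ ℓ (s i * v * s j)) (hy : cLE cs y v) :
    cLE cs y (s i * v * s j) ∨
      (cLE cs (s i * y * s j) (s i * v * s j) ∧ ℓ (s i * y * s j) ≤ ℓ y) := by
  have hrsi := cs.isReflection_simple i
  have hrsj := cs.isReflection_simple j
  rcases cs.length_simple_mul v i with hsv | hsv
  · -- ℓ (s i * v) = ℓ v + 1
    rcases cs.length_mul_simple (s i * v) j with hw2 | hw2
    · -- ℓ w = ℓ v + 2 : v ≤ s i * v ≤ w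
      left
      have c1 : cLE cs v (s i * v) := cLE_mul_left cs hrsi (by omega)
      have c2 : cLE cs (s i * v) (s i * v * s j) := cLE_mul_right cs hrsj (by omega)
      exact cLE_trans cs hy (cLE_trans cs c1 c2)
    · -- ℓ w = ℓ v
      have hwv : ℓ (s i * v * s j) = ℓ v := by omega
      rcases cs.length_mul_simple v j with hvt | hvt
      · -- L1 : w = v
        left
        have hl1 : s i * v * s j = v := by
          apply L1 cs i hrsj hsv (by omega) (by omega)
        rw [hl1]
        exact hy
      · -- right descent j on v
        have hu₀ : ℓ (v * s j) + 1 = ℓ v := hvt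
        have hassoc : s i * (v * s j) = s i * v * s j := by rw [mul_assoc]
        have hsu₀ : ℓ (v * s j) < ℓ (s i * (v * s j)) := by rw [hassoc]; omega
        rcases Nat.lt_or_ge (ℓ (y * s j)) (ℓ y) with hyj | hyj
        · -- right descent j on y
          right
          have c1 : cLE cs (y * s j) (v * s j) := cP4r cs j (by omega) hyj hy
          have hyassoc : s i * (y * s j) = s i * y * s j := by rw [mul_assoc]
          rcases Nat.lt_or_ge (ℓ (y * s j)) (ℓ (s i * (y * s j))) with hsy | hsy
          · have c2 : cLE cs (s i * (y * s j)) (s i * (v * s j)) := cP2 cs i hsu₀ hsy c1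
            rw [hyassoc, hassoc] at c2
            refine ⟨c2, ?_⟩
            have hne := cs.length_simple_mul (y * s j) i
            rw [hyassoc] at hne
            rw [← hyassoc] at *
            omega
          · -- ℓ (s i * (y * s j)) ≤ ℓ (y * s j), in fact <
            have hne := cs.length_simple_mul (y * s j) i
            have hlt : ℓ (s i * (y * s j)) + 1 = ℓ (y * s j) := by omega
            have c2 : cLE cs (s i * (y * s j)) (y * s j) := by
              have hcan : s i * (s i * (y * s j)) = y * s j :=
                cs.simple_mul_simple_cancel_left i
              have := cLE_mul_left cs hrsi (x := s i * (y * s j)) (by rw [hcan]; omega)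
              rwa [hcan] at this
            have c3 : cLE cs (v * s j) (s i * (v * s j)) := cLE_mul_left cs hrsi hsu₀
            have call := cLE_trans cs c2 (cLE_trans cs c1 c3)
            rw [hyassoc, hassoc] at call
            refine ⟨call, by rw [← hyassoc]; omega⟩
        · -- right ascent j on y
          left
          have c1 : cLE cs y (v * s j) := cP3r cs j (by omega) (by
            have := cs.length_mul_simple_ne y j
            omega) hy
          have c2 : cLE cs (v * s j) (s i * (v * s j)) := cLE_mul_left cs hrsi hsu₀
          rw [hassoc] at c2
          exact cLE_trans cs c1 c2
  · -- ℓ (s i * v) + 1 = ℓ v : left descent i on v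
    have hw2 : ℓ (s i * v * s j) = ℓ (s i * v) + 1 := by
      rcases cs.length_mul_simple (s i * v) j with h | h
      · exact h
      · omega
    rcases Nat.lt_or_ge (ℓ (s i * y)) (ℓ y) with hsy | hsy
    · right
      have c1 : cLE cs (s i * y) (s i * v) := cP4 cs i (by omega) hsy hy
      rcases Nat.lt_or_ge (ℓ (s i * y)) (ℓ (s i * y * s j)) with hyj | hyj
      · have c2 : cLE cs (s i * y * s j) (s i * v * s j) := cP2r cs j (by omega) hyj c1
        refine ⟨c2, ?_⟩
        have hne := cs.length_mul_simple (s i * y) j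
        omega
      · have hne := cs.length_mul_simple (s i * y) j
        have hlt : ℓ (s i * y * s j) + 1 = ℓ (s i * y) := by omega
        have c2 : cLE cs (s i * y * s j) (s i * y) := by
          have hcan : s i * y * s j * s j = s i * y :=
            cs.simple_mul_simple_cancel_right j
          have := cLE_mul_right cs hrsj (x := s i * y * s j) (by rw [hcan]; omega)
          rwa [hcan] at this
        have c3 : cLE cs (s i * v) (s i * v * s j) := cLE_mul_right cs hrsj (by omega)
        exact ⟨cLE_trans cs c2 (cLE_trans cs c1 c3), by omega⟩
    · left
      have c1 : cLE cs y (s i * v) := cP3 cs i (by omega) (by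
        have := cs.length_simple_mul_ne y i
        omega) hy
      have c2 : cLE cs (s i * v) (s i * v * s j) := cLE_mul_right cs hrsj (by omega)
      exact cLE_trans cs c1 c2


lemma sigmaConj_conj (σ : W ≃* W) {o y : W} (g : W) (h : sigmaConj σ y o) :
    sigmaConj σ (g * y * (σ g)⁻¹) o := by
  obtain ⟨g₀, rfl⟩ := h
  refine ⟨g * g₀, ?_⟩
  rw [map_mul, mul_inv_rev]
  group

end CorAux

/-- Corollary 2.9: for a σ-conjugacy class `O` (of `o`) satisfying the reduction property,
there is a minimal length element of `O` below `w` in Bruhat order iff there is any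
element of `O` below `w`. -/
theorem preceq_iff_exists_le {B W : Type*} [Group W] {M : CoxeterMatrix B}
    (cs : CoxeterSystem M W) (σ : W ≃* W)
    (hσ : ∀ i : B, ∃ j : B, σ (cs.simple i) = cs.simple j)
    (o : W)
    (hred : ∀ w : W, sigmaConj σ w o →
      ∃ w' : W, minLenIn cs σ o w' ∧ Relation.ReflTransGen (cs.sigmaStep σ) w w')
    (w : W) :
    (∃ x : W, minLenIn cs σ o x ∧ cs.bruhatLE x w) ↔
      (∃ x : W, sigmaConj σ x o ∧ cs.bruhatLE x w) := by
  constructor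
  · rintro ⟨x, hmin, hb⟩
    exact ⟨x, hmin.1, hb⟩
  · rintro ⟨x, hconj, hb⟩
    obtain ⟨m, hmmin, hpath⟩ := hred x hconj
    have key : ∀ z, Relation.ReflTransGen (cs.sigmaStep σ) z m → sigmaConj σ z o →
        ∃ y, minLenIn cs σ o y ∧ CorAux.cLE cs y z := by
      intro z hz
      induction hz using Relation.ReflTransGen.head_induction_on with
      | refl => exact fun _ => ⟨m, hmmin, CorAux.cLE_refl cs m⟩
      | @head a b hstep htail ih =>
        intro hac
        obtain ⟨i, hab, hlen⟩ := hstep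
        obtain ⟨j, hj⟩ := hσ i
        have hsjinv : (σ (cs.simple i))⁻¹ = σ (cs.simple i) := by
          rw [hj, cs.inv_simple]
        have hbc : sigmaConj σ b o := by
          rw [hab, ← hsjinv]
          exact CorAux.sigmaConj_conj σ (cs.simple i) hac
        obtain ⟨y, hymin, hy⟩ := ih hbc
        have hinv : cs.simple i * b * cs.simple j = a := by
          rw [hab, hj]
          calc cs.simple i * (cs.simple i * a * cs.simple j) * cs.simple j
              = (cs.simple i * cs.simple i) * a * (cs.simple j * cs.simple j) := by group
          _ = a := by rw [cs.simple_mul_simple_self, cs.simple_mul_simple_self]; group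
        have hw : cs.length b ≤ cs.length (cs.simple i * b * cs.simple j) := by
          rw [hinv]
          exact hlen
        rcases CorAux.pullback_step cs i j hw hy with hcase | ⟨hcase, hylen⟩
        · exact ⟨y, hymin, by rwa [hinv] at hcase⟩
        · refine ⟨cs.simple i * y * cs.simple j, ⟨?_, ?_⟩, by rwa [hinv] at hcase⟩
          · have : cs.simple i * y * cs.simple j
                = cs.simple i * y * (σ (cs.simple i))⁻¹ := by rw [hsjinv, hj]
            rw [this]
            exact CorAux.sigmaConj_conj σ (cs.simple i) hymin.1
          · intro z' hz'
            have h1 := hymin.2 z' hz'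
            omega
    obtain ⟨y, hymin, hy⟩ := key x hpath hconj
    exact ⟨y, hymin, CorAux.bruhatLE_of_cLE cs
      (CorAux.cLE_trans cs hy (CorAux.cLE_of_bruhatLE cs hb))⟩
end

section
/- Admissibility of twisted powers: let W̃ be an extended affine Weyl group with σ as above, μ dominant, and suppose w ∈ Adm(μ). Assume σ(Adm(ν)) = Adm(σ₀(ν)) for all dominant ν (where σ = τ∘σ₀, τ(Adm)=Adm) and assume the additivity Adm(μ)Adm(μ') = Adm(μ+μ'). Then for n divisible by the orders involved, w·σ(w)·σ²(w)⋯σ^{n−1}(w) ∈ Adm(μ + σ₀(μ) + ⋯ + σ₀^{n−1}(μ)) = Adm(nμ^◇), and hence the translation (wσ)^n = t^λ satisfies λ̄ ≤ nμ^◇ in dominance order; consequently ν̄_{w,σ} ≤ μ^◇. -/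
/-- The σ-twisted power `w σ(w) σ²(w) ⋯ σ^{n−1}(w)`. -/
def twPow {Wt : Type*} [Group Wt] (σ : MulAut Wt) (w : Wt) : ℕ → Wt
  | 0 => 1
  | n + 1 => twPow σ w n * (σ ^ n) w

/-- Dominance order, integrally: a positive multiple of `y − x` is an ℕ-combination of
the positive coroots `C`. -/
def domLE {X : Type*} [AddCommGroup X] (C : Finset X) (x y : X) : Prop :=
  ∃ m : ℕ, 0 < m ∧ m • (y - x) ∈ AddSubmonoid.closure (C : Set X)

/-- Admissibility of twisted powers (core of Mazur's inequality): if `w ∈ Adm(μ)`,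
`σ(Adm(ν)) = Adm(σ₀(ν))` for dominant `ν`, and `Adm(ν)Adm(ν') = Adm(ν+ν')`, then
`w σ(w) ⋯ σ^{n−1}(w) ∈ Adm(μ + σ₀(μ) + ⋯ + σ₀^{n−1}(μ)) = Adm(n μ^◇)`; hence if this
twisted power is the translation `t^λ`, the dominant representative of `λ` is
`≤ n μ^◇ = Σ_{i<n} σ₀^i(μ)` in the dominance order (so `ν̄_{w,σ} ≤ μ^◇`). -/
theorem twisted_power_admissible
    {X : Type*} [AddCommGroup X] {G : Type*} [Group G] [DistribMulAction G X]
    (P : Finset (X →+ ℤ)) (C : Finset X)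
    {Wt : Type*} [Group Wt] (t : X → Wt) (ht : ∀ a b : X, t (a + b) = t a * t b)
    (le : Wt → Wt → Prop) [IsPartialOrder Wt le]
    (σ : MulAut Wt) (σ₀ : AddAut X)
    (hσ₀dom : ∀ nu : X, (∀ α ∈ P, 0 ≤ α nu) → (∀ α ∈ P, 0 ≤ α (σ₀ nu)))
    -- σ(Adm(ν)) = Adm(σ₀(ν)) for dominant ν
    (hσAdm : ∀ nu : X, (∀ α ∈ P, 0 ≤ α nu) → ∀ w : Wt,
      (∃ g : G, le w (t (g • nu))) ↔ ∃ g : G, le (σ w) (t (g • σ₀ nu)))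
    -- additivity: Adm(ν)·Adm(ν') = Adm(ν+ν') for dominant ν, ν'
    (hadd : ∀ nu nu' : X, (∀ α ∈ P, 0 ≤ α nu) → (∀ α ∈ P, 0 ≤ α nu') →
      ∀ z : Wt, (∃ g : G, le z (t (g • (nu + nu')))) ↔
        ∃ a b : Wt, z = a * b ∧ (∃ g : G, le a (t (g • nu))) ∧
          (∃ g : G, le b (t (g • nu'))))
    -- t^λ ∈ Adm(ν) implies λ̄ ≤ ν in dominance order
    (htAdm : ∀ (lam nu : X), (∀ α ∈ P, 0 ≤ α nu) →
      (∃ g : G, le (t lam) (t (g • nu))) →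
      ∀ d : X, (∀ α ∈ P, 0 ≤ α d) → (∃ g : G, d = g • lam) → domLE C d nu)
    (mu : X) (hmu : ∀ α ∈ P, 0 ≤ α mu)
    (w : Wt) (hw : ∃ g : G, le w (t (g • mu)))
    (n : ℕ) (hn : 0 < n) (hdvd : orderOf σ ∣ n) (hdvd₀ : addOrderOf σ₀ ∣ n) :
    (∃ g : G, le (twPow σ w n) (t (g • (∑ i ∈ Finset.range n, (i • σ₀) mu)))) ∧
    (∀ lam : X, twPow σ w n = t lam →
      ∀ d : X, (∀ α ∈ P, 0 ≤ α d) → (∃ g : G, d = g • lam) →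
        domLE C d (∑ i ∈ Finset.range n, (i • σ₀) mu)) := by
  have ht0 : t 0 = 1 := by
    have h := ht 0 0
    rw [add_zero] at h
    exact (left_eq_mul.mp h)
  have hdom : ∀ i : ℕ, ∀ α ∈ P, 0 ≤ α ((i • σ₀) mu) := by
    intro i
    induction i with
    | zero => simpa using hmu
    | succ k ih =>
      intro α hα
      have h2 := hσ₀dom _ ih α hα
      simpa [succ_nsmul', AddAut.add_apply] using h2
  have hdomS : ∀ k, ∀ α ∈ P, 0 ≤ α (∑ i ∈ Finset.range k, (i • σ₀) mu) := by
    intro k α hα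
    rw [map_sum]
    exact Finset.sum_nonneg fun i _ => hdom i α hα
  have hσw : ∀ i : ℕ, ∃ g : G, le ((σ ^ i) w) (t (g • ((i • σ₀) mu))) := by
    intro i
    induction i with
    | zero => simpa using hw
    | succ k ih =>
      have h2 := (hσAdm _ (hdom k) _).mp ih
      simpa [pow_succ', succ_nsmul', MulAut.mul_apply, AddAut.add_apply] using h2
  have main : ∀ k, ∃ g : G, le (twPow σ w k)
      (t (g • (∑ i ∈ Finset.range k, (i • σ₀) mu))) := by
    intro k
    induction k with
    | zero =>
      refine ⟨1, ?_⟩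
      simp only [twPow, Finset.range_zero, Finset.sum_empty, smul_zero, ht0]
      exact Std.Refl.refl 1
    | succ k ih =>
      rw [Finset.sum_range_succ]
      exact (hadd _ _ (hdomS k) (hdom k) _).mpr
        ⟨twPow σ w k, (σ ^ k) w, rfl, ih, hσw k⟩
  refine ⟨main n, ?_⟩
  intro lam hlam d hd hgd
  exact htAdm lam _ (hdomS n) (hlam ▸ main n) d hd hgd
end
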